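/- arXiv:1809.10942 — 6 statements merged into one kernel-verified Lean document; each statement's English description precedes it below -/
import Mathlib

section
/- Let U ⊆ Λ ⊆ ℝ^d be measurable sets with |Λ| = 1 and |U| > 0, let f ∈ L²(Λ), C ∈ [1,∞), and α ∈ (0,∞). Define W := {x ∈ Λ : |f(x)| < (|U|/(1+C))^α ‖f‖_{L²(Λ)}}. Assume that sup_{x ∈ U} |f(x)| ≥ (|U|/C)^α ‖f‖_{L²(Λ)} and sup_{x ∈ W} |f(x)| ≥ (|W|/C)^α ‖f‖_{L²(Λ)}. Then |W| ≤ C(1+C)^{−1}|U| and ‖f‖_{L²(U)} ≥ (|U|/(1+C))^{α + 1/2} ‖f‖_{L²(Λ)}. -/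
open MeasureTheory

/-- level-set lemma. -/
theorem stmt_1 (d : ℕ) (U Λ : Set (Fin d → ℝ)) (hUΛ : U ⊆ Λ)
    (hΛm : MeasurableSet Λ) (hUm : MeasurableSet U)
    (hΛ1 : volume Λ = 1) (hU0 : 0 < volume U)
    (f : (Fin d → ℝ) → ℂ) (hfm : Measurable f)
    (hf2 : IntegrableOn (fun x => ‖f x‖ ^ 2) Λ)
    (C α : ℝ) (hC : 1 ≤ C) (hα : 0 < α)
    (N : ℝ) (hN : N = Real.sqrt (∫ x in Λ, ‖f x‖ ^ 2))
    (W : Set (Fin d → ℝ))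
    (hW : W = {x ∈ Λ | ‖f x‖ < ((volume U).toReal / (1 + C)) ^ α * N})
    (hsupU : ((volume U).toReal / C) ^ α * N ≤ sSup ((fun x => ‖f x‖) '' U))
    (hsupW : ((volume W).toReal / C) ^ α * N ≤ sSup ((fun x => ‖f x‖) '' W)) :
    (volume W).toReal ≤ C / (1 + C) * (volume U).toReal ∧
      ((volume U).toReal / (1 + C)) ^ (α + 1 / 2) * N ≤
        Real.sqrt (∫ x in U, ‖f x‖ ^ 2) := by
  have h1C : (0:ℝ) < 1 + C := by linarith
  have hCpos : (0:ℝ) < C := by linarith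
  have hΛfin : volume Λ ≠ ⊤ := by rw [hΛ1]; exact ENNReal.one_ne_top
  have hUfin : volume U ≠ ⊤ := ne_top_of_le_ne_top hΛfin (measure_mono hUΛ)
  have hWΛ : W ⊆ Λ := by rw [hW]; exact fun x hx => hx.1
  have hWfin : volume W ≠ ⊤ := ne_top_of_le_ne_top hΛfin (measure_mono hWΛ)
  set u := (volume U).toReal with hu
  set w := (volume W).toReal with hwdef
  have hupos : 0 < u := ENNReal.toReal_pos hU0.ne' hUfin
  have hNnn : 0 ≤ N := hN ▸ Real.sqrt_nonneg _
  set b : ℝ := u / (1 + C) with hb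
  have hbpos : 0 < b := div_pos hupos h1C
  set t : ℝ := b ^ α * N with ht
  have htnn : 0 ≤ t := mul_nonneg (Real.rpow_nonneg hbpos.le _) hNnn
  have hWm : MeasurableSet W := by
    rw [hW]
    exact hΛm.inter
      (measurableSet_lt (continuous_norm.measurable.comp hfm) measurable_const)
  -- Claim 1
  have hw : w ≤ C / (1 + C) * u := by
    rcases eq_or_lt_of_le hNnn with hN0 | hNpos
    · have hWe : W = ∅ := by
        rw [hW]
        ext x
        simp only [Set.mem_setOf_eq, Set.mem_empty_iff_false, iff_false, not_and, not_lt]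
        intro _
        rw [ht, ← hN0, mul_zero]
        exact norm_nonneg (f x)
      have hw0 : w = 0 := by rw [hwdef, hWe]; simp
      rw [hw0]; positivity
    · have hsle : sSup ((fun x => ‖f x‖) '' W) ≤ t := by
        apply Real.sSup_le _ htnn
        rintro y ⟨x, hx, rfl⟩
        rw [hW] at hx
        exact hx.2.le
      have h1 : (w / C) ^ α * N ≤ b ^ α * N := le_trans hsupW hsle
      have h2 : (w / C) ^ α ≤ b ^ α := le_of_mul_le_mul_right h1 hNpos
      have h3 : w / C ≤ b := by
        by_contra hcon
        push_neg at hcon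
        exact absurd (Real.rpow_lt_rpow hbpos.le hcon hα) (not_lt.mpr h2)
      rw [div_le_div_iff₀ hCpos h1C] at h3
      rw [div_mul_eq_mul_div, le_div_iff₀ h1C]
      nlinarith
  refine ⟨hw, ?_⟩
  -- Claim 2
  set S := U \ W with hS
  have hSm : MeasurableSet S := hUm.diff hWm
  have hSfin : volume S ≠ ⊤ := ne_top_of_le_ne_top hUfin (measure_mono Set.diff_subset)
  have hIU : IntegrableOn (fun x => ‖f x‖ ^ 2) U := hf2.mono_set hUΛ
  have hIS : IntegrableOn (fun x => ‖f x‖ ^ 2) S := hIU.mono_set Set.diff_subset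
  have hpt : ∀ x ∈ S, t ^ 2 ≤ ‖f x‖ ^ 2 := by
    rintro x ⟨hxU, hxW⟩
    have hxΛ : x ∈ Λ := hUΛ hxU
    have hnl : ¬ ‖f x‖ < t := fun hlt => hxW (by rw [hW]; exact ⟨hxΛ, hlt⟩)
    exact pow_le_pow_left₀ htnn (not_lt.mp hnl) 2
  have hI1 : t ^ 2 * (volume S).toReal ≤ ∫ x in S, ‖f x‖ ^ 2 := by
    have hc : IntegrableOn (fun _ => t ^ 2) S := by
      refine (integrableOn_const_iff).mpr (Or.inr ?_)
      exact lt_of_le_of_lt (le_of_eq rfl) hSfin.lt_top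
    have := setIntegral_mono_on hc hIS hSm hpt
    rwa [setIntegral_const, smul_eq_mul, mul_comm] at this
  have hI2 : (∫ x in S, ‖f x‖ ^ 2) ≤ ∫ x in U, ‖f x‖ ^ 2 := by
    apply setIntegral_mono_set hIU
    · filter_upwards with x using by positivity
    · exact HasSubset.Subset.eventuallyLE Set.diff_subset
  have hvolS : u - w ≤ (volume S).toReal := by
    have hsub : U ⊆ S ∪ W := by
      intro x hx
      by_cases hxW : x ∈ W
      · exact Or.inr hxW
      · exact Or.inl ⟨hx, hxW⟩
    have hle : volume U ≤ volume S + volume W :=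
      (measure_mono hsub).trans (measure_union_le _ _)
    have h := (ENNReal.toReal_le_toReal hUfin
      (ENNReal.add_ne_top.mpr ⟨hSfin, hWfin⟩)).mpr hle
    rw [ENNReal.toReal_add hSfin hWfin] at h
    linarith
  have hw2 := hw
  rw [div_mul_eq_mul_div, le_div_iff₀ h1C] at hw2
  have hub : b ≤ u - w := by
    rw [hb, div_le_iff₀ h1C]
    nlinarith
  have hIlb : t ^ 2 * b ≤ ∫ x in U, ‖f x‖ ^ 2 := by
    have h4 : t ^ 2 * b ≤ t ^ 2 * (volume S).toReal :=
      mul_le_mul_of_nonneg_left (le_trans hub hvolS) (by positivity)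
    linarith
  have hhalf : (b ^ ((1:ℝ)/2)) ^ 2 = b := by
    rw [← Real.rpow_natCast (b ^ ((1:ℝ)/2)) 2, ← Real.rpow_mul hbpos.le]
    norm_num
  have hRHS : (b ^ (α + 1/2) * N) ^ 2 = t ^ 2 * b := by
    rw [Real.rpow_add hbpos, ht,
      show (b ^ α * b ^ ((1:ℝ)/2) * N) ^ 2 = (b ^ α * N) ^ 2 * (b ^ ((1:ℝ)/2)) ^ 2 from by ring,
      hhalf]
  calc b ^ (α + 1/2) * N
      = Real.sqrt ((b ^ (α + 1/2) * N) ^ 2) :=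
        (Real.sqrt_sq (by positivity)).symm
    _ ≤ Real.sqrt (∫ x in U, ‖f x‖ ^ 2) :=
        Real.sqrt_le_sqrt (by rw [hRHS]; exact hIlb)
end

section
/- Let d ≥ 2, L > 0, γ ∈ (0,1], a = (a₁,…,a_d) ∈ ℝ₊^d with a_j ≤ 2πL for j = 1,…,d−1, and let S ⊆ Ω_L be a measurable set that is (γ,a)-thick with respect to Ω_L. Then the set S̃ := S ∪ (ℝ^d ∖ Ω_L) is (γ/2^d, 2a)-thick in ℝ^d, where 2a = (2a₁,…,2a_d). -/
open MeasureTheory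

/-- The infinite strip `Ω_L = (0,2πL)^{d-1} × ℝ ⊆ ℝ^d`. -/
def OmegaL (d : ℕ) (L : ℝ) : Set (Fin d → ℝ) :=
  {x | ∀ j : Fin d, (j : ℕ) < d - 1 → x j ∈ Set.Ioo 0 (2 * Real.pi * L)}

/-- A measurable set `S ⊆ ℝ^d` is `(γ,a)`-thick: every axis-parallel parallelepiped with
side lengths `a₁,…,a_d` satisfies `|S ∩ P| ≥ γ|P|`. -/
def IsThick {d : ℕ} (γ : ℝ) (a : Fin d → ℝ) (S : Set (Fin d → ℝ)) : Prop :=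
  ∀ c : Fin d → ℝ,
    ENNReal.ofReal γ * volume (Set.univ.pi fun j => Set.Ioo (c j) (c j + a j)) ≤
      volume (S ∩ Set.univ.pi fun j => Set.Ioo (c j) (c j + a j))

/-- A measurable set `ω` is `(γ,a)`-thick with respect to `Ω`: every axis-parallel
parallelepiped `P ⊆ Ω` with side lengths `a₁,…,a_d` satisfies `|ω ∩ P| ≥ γ|P|`. -/
def IsThickIn {d : ℕ} (γ : ℝ) (a : Fin d → ℝ) (Ω ω : Set (Fin d → ℝ)) : Prop :=
  ∀ c : Fin d → ℝ,
    (Set.univ.pi fun j => Set.Ioo (c j) (c j + a j)) ⊆ Ω →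
      ENNReal.ofReal γ * volume (Set.univ.pi fun j => Set.Ioo (c j) (c j + a j)) ≤
        volume (ω ∩ Set.univ.pi fun j => Set.Ioo (c j) (c j + a j))

/-- if `S ⊆ Ω_L` is `(γ,a)`-thick with respect to `Ω_L` (with
`a_j ≤ 2πL` in the first `d-1` coordinates), then `S ∪ (ℝ^d ∖ Ω_L)` is
`(γ/2^d, 2a)`-thick in `ℝ^d`. -/
theorem stmt_5 (d : ℕ) (hd : 2 ≤ d) (L γ : ℝ) (hL : 0 < L) (hγ0 : 0 < γ) (hγ1 : γ ≤ 1)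
    (a : Fin d → ℝ) (ha : ∀ j, 0 < a j)
    (haL : ∀ j : Fin d, (j : ℕ) < d - 1 → a j ≤ 2 * Real.pi * L)
    (S : Set (Fin d → ℝ)) (hSm : MeasurableSet S) (hSΩ : S ⊆ OmegaL d L)
    (hthick : IsThickIn γ a (OmegaL d L) S) :
    IsThick (γ / 2 ^ d) (fun j => 2 * a j) (S ∪ (OmegaL d L)ᶜ) := by
  intro c
  beta_reduce
  set M : ℝ := 2 * Real.pi * L with hMdef
  have hM0 : 0 < M := by positivity
  have h2d : (0:ℝ) < 2 ^ d := by positivity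
  have hvolP : volume (Set.univ.pi fun j => Set.Ioo (c j) (c j + 2 * a j))
      = ENNReal.ofReal (2 ^ d * ∏ j, a j) := by
    rw [volume_pi_pi]
    simp only [Real.volume_Ioo, add_sub_cancel_left]
    rw [← ENNReal.ofReal_prod_of_nonneg (fun i _ => by linarith [ha i])]
    congr 1
    rw [Finset.prod_mul_distrib, Finset.prod_const]
    simp
  by_cases hbad : ∃ j : Fin d, (j : ℕ) < d - 1 ∧ min (c j + 2 * a j) M - max (c j) 0 < a j
  · obtain ⟨j₀, hj₀, hb⟩ := hbad
    set f : Fin d → Set ℝ := fun j =>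
      if j = j₀ then Set.Ioo (c j) (c j + 2 * a j) \ Set.Ioo 0 M
      else Set.Ioo (c j) (c j + 2 * a j) with hf
    have hTsub : Set.univ.pi f ⊆
        (S ∪ (OmegaL d L)ᶜ) ∩ Set.univ.pi fun j => Set.Ioo (c j) (c j + 2 * a j) := by
      intro x hx
      refine ⟨Or.inr fun hxΩ => ?_, fun j _ => ?_⟩
      · have h := hx j₀ (Set.mem_univ _)
        simp only [hf, if_pos rfl] at h
        exact h.2 (hxΩ j₀ hj₀)
      · have h := hx j (Set.mem_univ _)
        by_cases hj : j = j₀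
        · simp only [hf, if_pos hj] at h; exact h.1
        · simpa only [hf, if_neg hj] using h
    have hfj₀ : ENNReal.ofReal (a j₀) ≤ volume (f j₀) := by
      have hmeas := measure_inter_add_diff (μ := volume)
        (Set.Ioo (c j₀) (c j₀ + 2 * a j₀)) (measurableSet_Ioo (a := (0:ℝ)) (b := M))
      have h1 : volume (Set.Ioo (c j₀) (c j₀ + 2 * a j₀) ∩ Set.Ioo 0 M)
          ≤ ENNReal.ofReal (a j₀) := by
        rw [Set.Ioo_inter_Ioo, Real.volume_Ioo]
        exact ENNReal.ofReal_le_ofReal hb.le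
      have h2 : volume (Set.Ioo (c j₀) (c j₀ + 2 * a j₀))
          = ENNReal.ofReal (a j₀) + ENNReal.ofReal (a j₀) := by
        rw [Real.volume_Ioo, ← ENNReal.ofReal_add (ha j₀).le (ha j₀).le]
        congr 1; ring
      rw [h2] at hmeas
      have h3 : ENNReal.ofReal (a j₀) + ENNReal.ofReal (a j₀)
          ≤ ENNReal.ofReal (a j₀) + volume (Set.Ioo (c j₀) (c j₀ + 2 * a j₀) \ Set.Ioo 0 M) := by
        rw [← hmeas]; exact add_le_add h1 le_rfl
      have h4 := (ENNReal.add_le_add_iff_left ENNReal.ofReal_ne_top).mp h3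
      simpa only [hf, if_pos rfl] using h4
    calc ENNReal.ofReal (γ / 2 ^ d) *
          volume (Set.univ.pi fun j => Set.Ioo (c j) (c j + 2 * a j))
        = ENNReal.ofReal (γ / 2 ^ d * (2 ^ d * ∏ j, a j)) := by
          rw [hvolP, ← ENNReal.ofReal_mul (div_nonneg hγ0.le (by positivity))]
      _ ≤ ENNReal.ofReal (a j₀ * ∏ j ∈ Finset.univ.erase j₀, (2 * a j)) := by
          apply ENNReal.ofReal_le_ofReal
          have e1 : γ / 2 ^ d * (2 ^ d * ∏ j, a j) = γ * ∏ j, a j := by field_simp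
          rw [e1, ← Finset.mul_prod_erase Finset.univ a (Finset.mem_univ j₀)]
          have hp : (0:ℝ) ≤ ∏ j ∈ Finset.univ.erase j₀, a j :=
            Finset.prod_nonneg fun j _ => (ha j).le
          calc γ * (a j₀ * ∏ j ∈ Finset.univ.erase j₀, a j)
              ≤ 1 * (a j₀ * ∏ j ∈ Finset.univ.erase j₀, a j) := by
                exact mul_le_mul_of_nonneg_right hγ1 (mul_nonneg (ha j₀).le hp)
            _ = a j₀ * ∏ j ∈ Finset.univ.erase j₀, a j := one_mul _
            _ ≤ a j₀ * ∏ j ∈ Finset.univ.erase j₀, (2 * a j) := by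
                apply mul_le_mul_of_nonneg_left _ (ha j₀).le
                apply Finset.prod_le_prod (fun j _ => (ha j).le) (fun j _ => by linarith [ha j])
      _ = ENNReal.ofReal (a j₀) * ∏ j ∈ Finset.univ.erase j₀, ENNReal.ofReal (2 * a j) := by
          rw [ENNReal.ofReal_mul (ha j₀).le,
            ENNReal.ofReal_prod_of_nonneg (fun j _ => by linarith [ha j])]
      _ ≤ volume (f j₀) * ∏ j ∈ Finset.univ.erase j₀, volume (f j) := by
          apply mul_le_mul' hfj₀
          apply Finset.prod_le_prod' -- maybe wrong name
          intro j hj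
          have hj' : j ≠ j₀ := Finset.ne_of_mem_erase hj
          simp only [hf, if_neg hj', Real.volume_Ioo, add_sub_cancel_left]
          exact le_rfl
      _ = ∏ j, volume (f j) := Finset.mul_prod_erase Finset.univ (fun j => volume (f j)) (Finset.mem_univ j₀)
      _ = volume (Set.univ.pi f) := (volume_pi_pi f).symm
      _ ≤ volume ((S ∪ (OmegaL d L)ᶜ) ∩ Set.univ.pi fun j => Set.Ioo (c j) (c j + 2 * a j)) :=
          measure_mono hTsub
  · push_neg at hbad
    set c' : Fin d → ℝ := fun j => if (j : ℕ) < d - 1 then max (c j) 0 else c j with hc'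
    have hkey : ∀ j : Fin d, (j : ℕ) < d - 1 →
        max (c j) 0 + a j ≤ min (c j + 2 * a j) M := by
      intro j hj; linarith [hbad j hj]
    have hQsub : ∀ j : Fin d, Set.Ioo (c' j) (c' j + a j) ⊆ Set.Ioo (c j) (c j + 2 * a j) := by
      intro j
      apply Set.Ioo_subset_Ioo
      · by_cases hj : (j:ℕ) < d - 1 <;> simp [hc', hj]
      · by_cases hj : (j:ℕ) < d - 1
        · have h := hkey j hj
          simp only [hc', if_pos hj]
          linarith [min_le_left (c j + 2 * a j) M]
        · simp only [hc', if_neg hj]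
          linarith [(ha j).le]
    have hQΩ : (Set.univ.pi fun j => Set.Ioo (c' j) (c' j + a j)) ⊆ OmegaL d L := by
      intro x hx j hj
      have hxj := hx j (Set.mem_univ _)
      have h1 : (0:ℝ) ≤ c' j := by simp [hc', hj]
      have h2 : c' j + a j ≤ M := by
        have h := hkey j hj
        simp only [hc', if_pos hj]
        linarith [min_le_right (c j + 2 * a j) M]
      exact ⟨lt_of_le_of_lt h1 hxj.1, lt_of_lt_of_le hxj.2 h2⟩
    have hvolQ : volume (Set.univ.pi fun j => Set.Ioo (c' j) (c' j + a j))
        = ENNReal.ofReal (∏ j, a j) := by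
      rw [volume_pi_pi]
      simp only [Real.volume_Ioo, add_sub_cancel_left]
      rw [← ENNReal.ofReal_prod_of_nonneg (fun i _ => (ha i).le)]
    calc ENNReal.ofReal (γ / 2 ^ d) *
          volume (Set.univ.pi fun j => Set.Ioo (c j) (c j + 2 * a j))
        = ENNReal.ofReal γ * volume (Set.univ.pi fun j => Set.Ioo (c' j) (c' j + a j)) := by
          rw [hvolP, hvolQ, ← ENNReal.ofReal_mul (div_nonneg hγ0.le (by positivity)),
            ← ENNReal.ofReal_mul hγ0.le]
          congr 1; field_simp
      _ ≤ volume (S ∩ Set.univ.pi fun j => Set.Ioo (c' j) (c' j + a j)) := hthick c' hQΩ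
      _ ≤ volume ((S ∪ (OmegaL d L)ᶜ) ∩ Set.univ.pi fun j => Set.Ioo (c j) (c j + 2 * a j)) := by
          apply measure_mono
          rintro x ⟨hxS, hxQ⟩
          exact ⟨Or.inl hxS, fun j _ => hQsub j (hxQ j (Set.mem_univ _))⟩
end

section
/- Let d ≥ 1, let Λ ⊂ ℝ^d be a closed axis-parallel cube with side length 1, let S ⊆ ℝ^d be measurable with |S ∩ Λ| > 0, and let y ∈ Λ. Then there exists a unit vector η ∈ ℝ^d such that, setting r₀ := sup{r ≥ 0 : y + rη ∈ Λ} (so that I := {y + rη : 0 ≤ r ≤ r₀} is the longest line segment in Λ starting at y in direction η), the one-dimensional Lebesgue measure of {t ∈ [0, r₀] : y + tη ∈ S} is at least |S ∩ Λ| / (σ_{d−1} d^{(d−1)/2}); in particular, since r₀ ≤ √d, the ratio |{t ∈ [0,r₀] : y + tη ∈ S}| / r₀ is at least |S ∩ Λ| / (σ_{d−1} d^{d/2}). -/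
open MeasureTheory
open scoped ENNReal

lemma exists_lintegral_le_mul {α : Type*} [MeasurableSpace α] (μ : Measure α) [IsFiniteMeasure μ]
    (hμ : μ Set.univ ≠ 0) {L : α → ℝ≥0∞} (hL : Measurable L) (hI : ∫⁻ x, L x ∂μ ≠ ⊤) :
    ∃ x, ∫⁻ x, L x ∂μ ≤ μ Set.univ * L x := by
  by_contra h
  push_neg at h
  set I := ∫⁻ x, L x ∂μ with hIdef
  set A := I / μ Set.univ with hA
  have hμtop : μ Set.univ ≠ ⊤ := measure_ne_top μ _
  have hlt : ∀ x, L x < A := fun x => by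
    rw [hA, ENNReal.lt_div_iff_mul_lt (Or.inl hμ) (Or.inl hμtop), mul_comm]
    exact h x
  have hAμ : A * μ Set.univ = I := ENNReal.div_mul_cancel hμ hμtop
  have hsub : ∫⁻ x, (A - L x) ∂μ = 0 := by
    rw [lintegral_sub hL hI (Filter.Eventually.of_forall fun x => (hlt x).le), lintegral_const,
      hAμ, tsub_self]
  have hae := (lintegral_eq_zero_iff (measurable_const.sub hL)).mp hsub
  have hne : (MeasureTheory.ae μ).NeBot := ae_neBot.2 (Measure.measure_univ_ne_zero.mp hμ)
  obtain ⟨x, hx⟩ := hae.exists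
  have : A ≤ L x := tsub_eq_zero_iff_le.mp hx
  exact absurd this (not_le.2 (hlt x))

/-- for a closed unit cube `Λ ⊆ ℝ^d`, a measurable `S` with `|S ∩ Λ| > 0`
and `y ∈ Λ`, there is a direction `η` of unit (Euclidean) norm such that the longest line
segment `I ⊆ Λ` starting at `y` in direction `η` meets `S` in a set of one-dimensional
measure at least `|S ∩ Λ|/(σ_{d-1} d^{(d-1)/2})`; in particular (since `|I| ≤ √d`), the
density of `S` on `I` is at least `|S ∩ Λ|/(σ_{d-1} d^{d/2})`. Here
`σ_{d-1} = 2π^{d/2}/Γ(d/2)` is the surface measure of the unit sphere `𝕊^{d-1} ⊆ ℝ^d`. -/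
theorem stmt_9 (d : ℕ) (hd : 1 ≤ d) (c : Fin d → ℝ)
    (Λ : Set (EuclideanSpace ℝ (Fin d)))
    (hΛ : Λ = {x : EuclideanSpace ℝ (Fin d) | ∀ j, x j ∈ Set.Icc (c j) (c j + 1)})
    (S : Set (EuclideanSpace ℝ (Fin d))) (hSm : MeasurableSet S)
    (hS0 : 0 < volume (S ∩ Λ)) (y : EuclideanSpace ℝ (Fin d)) (hy : y ∈ Λ) :
    ∃ η : EuclideanSpace ℝ (Fin d), ‖η‖ = 1 ∧
      ∀ r₀ : ℝ, r₀ = sSup {r : ℝ | 0 ≤ r ∧ y + r • η ∈ Λ} →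
        (volume (S ∩ Λ)).toReal /
            (2 * Real.pi ^ ((d : ℝ) / 2) / Real.Gamma ((d : ℝ) / 2) *
              (d : ℝ) ^ (((d : ℝ) - 1) / 2)) ≤
          (volume {t : ℝ | t ∈ Set.Icc 0 r₀ ∧ y + t • η ∈ S}).toReal ∧
        (volume (S ∩ Λ)).toReal /
            (2 * Real.pi ^ ((d : ℝ) / 2) / Real.Gamma ((d : ℝ) / 2) *
              (d : ℝ) ^ ((d : ℝ) / 2)) ≤
          (volume {t : ℝ | t ∈ Set.Icc 0 r₀ ∧ y + t • η ∈ S}).toReal / r₀ := by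
  classical
  haveI : Nonempty (Fin d) := ⟨⟨0, hd⟩⟩
  have hd0 : (0:ℝ) < d := by exact_mod_cast hd
  have hsd : (0:ℝ) < Real.sqrt d := Real.sqrt_pos.2 hd0
  -- measurability of Λ
  have hΛm : MeasurableSet Λ := by
    rw [hΛ, Set.setOf_forall]
    exact MeasurableSet.iInter fun j =>
      measurableSet_preimage (by fun_prop) measurableSet_Icc
  -- diameter bound
  have hdiam : ∀ a ∈ Λ, ∀ b ∈ Λ, ‖a - b‖ ≤ Real.sqrt d := by
    intro a ha b hb
    rw [hΛ] at ha hb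
    rw [EuclideanSpace.norm_eq]
    have hb1 : ∀ j, ‖(a - b) j‖ ^ 2 ≤ 1 := by
      intro j
      have h1 := ha j
      have h2 := hb j
      simp only [Set.mem_Icc] at h1 h2
      have habs : |a j - b j| ≤ 1 := abs_le.2 ⟨by linarith, by linarith⟩
      have : ‖(a - b) j‖ = |a j - b j| := by
        simp [PiLp.sub_apply, Real.norm_eq_abs]
      rw [this]
      calc |a j - b j| ^ 2 ≤ 1 ^ 2 := by
            apply pow_le_pow_left₀ (abs_nonneg _) habs
        _ = 1 := one_pow 2
    calc Real.sqrt (∑ j, ‖(a - b) j‖ ^ 2) ≤ Real.sqrt (∑ _j : Fin d, (1:ℝ)) := by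
          apply Real.sqrt_le_sqrt
          exact Finset.sum_le_sum fun j _ => hb1 j
      _ = Real.sqrt d := by simp
  -- translated set
  set T : Set (EuclideanSpace ℝ (Fin d)) := (fun x => y + x) ⁻¹' (S ∩ Λ) with hTdef
  have hTm : MeasurableSet T := (measurable_const_add y) (hSm.inter hΛm)
  have hvolT : volume T = volume (S ∩ Λ) := by
    exact measure_preimage_add volume y (S ∩ Λ)
  have hTsub : ∀ x ∈ T, ‖x‖ ≤ Real.sqrt d := by
    intro x hx
    have hx' : y + x ∈ Λ := hx.2
    have := hdiam (y + x) hx' y hy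
    simpa using this
  have hVfin : volume T ≠ ⊤ := by
    refine ne_top_of_le_ne_top (measure_closedBall_lt_top (x := (0:EuclideanSpace ℝ (Fin d)))
      (r := Real.sqrt d)).ne (measure_mono ?_)
    intro x hx
    simpa [Metric.mem_closedBall, dist_zero_right] using hTsub x hx
  -- volume of the origin is zero
  have hvol0 : volume ({0} : Set (EuclideanSpace ℝ (Fin d))) = 0 := by
    have h := EuclideanSpace.volume_closedBall (Fin d) (0 : EuclideanSpace ℝ (Fin d)) 0
    have h0 : volume (Metric.closedBall (0 : EuclideanSpace ℝ (Fin d)) 0) = 0 := by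
      rw [h]
      rw [ENNReal.ofReal_zero, zero_pow (by simp [Fintype.card_fin]; omega), zero_mul]
    refine le_antisymm (le_trans (measure_mono ?_) h0.le) zero_le
    intro x hx
    simp only [Set.mem_singleton_iff] at hx
    simp [hx]
  -- polar coordinates setup
  have hdim : Module.finrank ℝ (EuclideanSpace ℝ (Fin d)) = d := finrank_euclideanSpace_fin
  set n := Module.finrank ℝ (EuclideanSpace ℝ (Fin d)) - 1 with hn
  set f := homeomorphUnitSphereProd (EuclideanSpace ℝ (Fin d)) with hf
  set σm := (volume : Measure (EuclideanSpace ℝ (Fin d))).toSphere with hσm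
  have mp := Measure.measurePreserving_homeomorphUnitSphereProd
      (volume : Measure (EuclideanSpace ℝ (Fin d)))
  set s : Set (Metric.sphere (0 : EuclideanSpace ℝ (Fin d)) 1 × Set.Ioi (0:ℝ)) :=
    {p | (p.2 : ℝ) • (p.1 : EuclideanSpace ℝ (Fin d)) ∈ T} with hs
  have hsm : MeasurableSet s := by
    have hcont : Continuous fun p : Metric.sphere (0 : EuclideanSpace ℝ (Fin d)) 1 × Set.Ioi (0:ℝ) =>
        (p.2 : ℝ) • (p.1 : EuclideanSpace ℝ (Fin d)) :=
      (continuous_subtype_val.comp continuous_snd).smul (continuous_subtype_val.comp continuous_fst)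
    exact measurableSet_preimage hcont.measurable hTm
  have hpre : f ⁻¹' s = ((↑) : ({0}ᶜ : Set (EuclideanSpace ℝ (Fin d))) → EuclideanSpace ℝ (Fin d)) ⁻¹' T := by
    ext x
    have hx0 : (x : EuclideanSpace ℝ (Fin d)) ≠ 0 := x.2
    simp only [Set.mem_preimage, hs, Set.mem_setOf_eq, hf,
      homeomorphUnitSphereProd_apply_fst_coe, homeomorphUnitSphereProd_apply_snd_coe,
      smul_inv_smul₀ (norm_ne_zero_iff.2 hx0)]
  have key : volume (S ∩ Λ) = ∫⁻ η, Measure.volumeIoiPow n (Prod.mk η ⁻¹' s) ∂σm := by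
    rw [← hvolT]
    have h2 := mp.measure_preimage hsm.nullMeasurableSet
    rw [hpre] at h2
    have h1 : (volume.comap ((↑) : ({0}ᶜ : Set (EuclideanSpace ℝ (Fin d))) → EuclideanSpace ℝ (Fin d)))
        (((↑) : ({0}ᶜ : Set (EuclideanSpace ℝ (Fin d))) → EuclideanSpace ℝ (Fin d)) ⁻¹' T) = volume T := by
      rw [(MeasurableEmbedding.subtype_coe (measurableSet_singleton (0 : EuclideanSpace ℝ (Fin d))).compl).comap_apply,
        Subtype.image_preimage_coe, Set.inter_comm, ← Set.diff_eq]
      exact measure_diff_null hvol0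
    rw [h1] at h2
    rw [h2, Measure.prod_apply hsm]
  -- measurable slice function, finite integral
  have hGm : Measurable fun η => Measure.volumeIoiPow n (Prod.mk η ⁻¹' s) :=
    measurable_measure_prodMk_left hsm
  have hGfin : ∫⁻ η, Measure.volumeIoiPow n (Prod.mk η ⁻¹' s) ∂σm ≠ ⊤ := by
    rw [← key, ← hvolT]; exact hVfin
  have hσu : σm Set.univ ≠ 0 := by
    rw [hσm, Measure.toSphere_apply_univ, hdim]
    exact mul_ne_zero (Nat.cast_ne_zero.mpr (by omega)) (Metric.measure_ball_pos volume 0 one_pos).ne'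
  obtain ⟨η, hη⟩ := exists_lintegral_le_mul σm hσu hGm hGfin
  rw [← key] at hη
  -- bound the slice integral by the linear measure
  set C : ℝ≥0∞ := ENNReal.ofReal (Real.sqrt d ^ n) with hC
  set L : ℝ≥0∞ := volume {r : ℝ | 0 < r ∧ r • (η : EuclideanSpace ℝ (Fin d)) ∈ T} with hL
  have hηnorm : ‖(η : EuclideanSpace ℝ (Fin d))‖ = 1 := mem_sphere_zero_iff_norm.mp η.2
  have hGC : Measure.volumeIoiPow n (Prod.mk η ⁻¹' s) ≤ C * L := by
    have hslm : MeasurableSet (Prod.mk η ⁻¹' s) := measurable_prodMk_left hsm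
    rw [Measure.volumeIoiPow, withDensity_apply _ hslm]
    have step1 : ∫⁻ r in Prod.mk η ⁻¹' s, ENNReal.ofReal (r.1 ^ n)
        ∂(Measure.comap ((↑) : Set.Ioi (0:ℝ) → ℝ) volume)
        ≤ ∫⁻ _r in Prod.mk η ⁻¹' s, C ∂(Measure.comap ((↑) : Set.Ioi (0:ℝ) → ℝ) volume) := by
      refine setLIntegral_mono measurable_const fun r hr => ?_
      have hrT : (r : ℝ) • (η : EuclideanSpace ℝ (Fin d)) ∈ T := hr
      have hrle : (r : ℝ) ≤ Real.sqrt d := by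
        have hb := hTsub _ hrT
        rwa [norm_smul, hηnorm, mul_one, Real.norm_eq_abs, abs_of_pos r.2] at hb
      exact ENNReal.ofReal_le_ofReal (pow_le_pow_left₀ (le_of_lt r.2) hrle n)
    refine step1.trans ?_
    rw [setLIntegral_const]
    refine mul_le_mul_right (le_of_eq ?_) C
    have hcoe : Prod.mk η ⁻¹' s
        = ((↑) : Set.Ioi (0:ℝ) → ℝ) ⁻¹' {r : ℝ | r • (η : EuclideanSpace ℝ (Fin d)) ∈ T} := rfl
    rw [hcoe, (MeasurableEmbedding.subtype_coe measurableSet_Ioi).comap_apply,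
      Subtype.image_preimage_coe, hL]
    rfl
  have hchain : volume (S ∩ Λ) ≤ σm Set.univ * (C * L) :=
    hη.trans (mul_le_mul_right hGC _)
  -- provide the direction
  refine ⟨(η : EuclideanSpace ℝ (Fin d)), hηnorm, ?_⟩
  intro r₀ hr₀
  set R : Set ℝ := {r : ℝ | 0 ≤ r ∧ y + r • (η : EuclideanSpace ℝ (Fin d)) ∈ Λ} with hRdef
  have hR0 : (0:ℝ) ∈ R := ⟨le_refl 0, by simpa using hy⟩
  have hRub : ∀ r ∈ R, r ≤ Real.sqrt d := by
    intro r hr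
    have h1 : ‖(y + r • (η : EuclideanSpace ℝ (Fin d))) - y‖ ≤ Real.sqrt d :=
      hdiam _ hr.2 y hy
    rwa [add_sub_cancel_left, norm_smul, hηnorm, mul_one, Real.norm_eq_abs,
      abs_of_nonneg hr.1] at h1
  have hRbdd : BddAbove R := ⟨Real.sqrt d, fun r hr => hRub r hr⟩
  have hr₀0 : 0 ≤ r₀ := hr₀ ▸ le_csSup hRbdd hR0
  have hr₀sd : r₀ ≤ Real.sqrt d := hr₀ ▸ csSup_le ⟨0, hR0⟩ hRub
  set M := volume {t : ℝ | t ∈ Set.Icc 0 r₀ ∧ y + t • (η : EuclideanSpace ℝ (Fin d)) ∈ S}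
    with hM
  have hLM : L ≤ M := by
    apply measure_mono
    rintro r ⟨hr0, hrT⟩
    have h1 : y + r • (η : EuclideanSpace ℝ (Fin d)) ∈ S ∩ Λ := hrT
    have hrR : r ∈ R := ⟨hr0.le, h1.2⟩
    exact ⟨⟨hr0.le, hr₀ ▸ le_csSup hRbdd hrR⟩, h1.1⟩
  have hMIcc : M ≤ ENNReal.ofReal r₀ := by
    have := measure_mono (μ := volume)
      (fun t (ht : t ∈ {t : ℝ | t ∈ Set.Icc 0 r₀ ∧
        y + t • (η : EuclideanSpace ℝ (Fin d)) ∈ S}) => ht.1)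
    rwa [Real.volume_Icc, sub_zero] at this
  have hMfin : M ≠ ⊤ := ne_top_of_le_ne_top ENNReal.ofReal_ne_top hMIcc
  have hchain2 : volume (S ∩ Λ) ≤ σm Set.univ * (C * M) :=
    hchain.trans (mul_le_mul_right (mul_le_mul_right hLM C) _)
  -- real versions
  have hσfin : σm Set.univ ≠ ⊤ := measure_ne_top σm _
  have hCfin : C ≠ ⊤ := ENNReal.ofReal_ne_top
  have hreal : (volume (S ∩ Λ)).toReal
      ≤ (σm Set.univ).toReal * ((Real.sqrt d ^ n) * M.toReal) := by
    have h := ENNReal.toReal_mono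
      (ENNReal.mul_ne_top hσfin (ENNReal.mul_ne_top hCfin hMfin)) hchain2
    rwa [ENNReal.toReal_mul, ENNReal.toReal_mul, hC,
      ENNReal.toReal_ofReal (pow_nonneg hsd.le n)] at h
  have hΓpos : 0 < Real.Gamma ((d:ℝ)/2) := Real.Gamma_pos_of_pos (by positivity)
  have hσR : (σm Set.univ).toReal = 2 * Real.pi ^ ((d:ℝ)/2) / Real.Gamma ((d:ℝ)/2) := by
    rw [hσm, Measure.toSphere_apply_univ, hdim, EuclideanSpace.volume_ball,
      ENNReal.toReal_mul, Fintype.card_fin, ENNReal.ofReal_one, one_pow, one_mul,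
      ENNReal.toReal_ofReal (by positivity), ENNReal.toReal_natCast]
    have hπ : Real.sqrt Real.pi ^ d = Real.pi ^ ((d:ℝ)/2) := by
      rw [Real.sqrt_eq_rpow, ← Real.rpow_natCast (Real.pi ^ ((1:ℝ)/2)) d,
        ← Real.rpow_mul Real.pi_nonneg]
      congr 1
      ring
    have hΓ : Real.Gamma ((d:ℝ)/2 + 1) = ((d:ℝ)/2) * Real.Gamma ((d:ℝ)/2) :=
      Real.Gamma_add_one (by positivity)
    rw [hπ, hΓ]
    field_simp
  have hcRe : Real.sqrt d ^ n = (d:ℝ) ^ (((d:ℝ)-1)/2) := by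
    have hn' : n = d - 1 := by rw [hn, hdim]
    rw [hn', Real.sqrt_eq_rpow, ← Real.rpow_natCast ((d:ℝ) ^ ((1:ℝ)/2)) (d-1),
      ← Real.rpow_mul hd0.le]
    congr 1
    rw [Nat.cast_sub hd]
    push_cast
    ring
  have hden1pos : 0 < 2 * Real.pi ^ ((d:ℝ)/2) / Real.Gamma ((d:ℝ)/2)
      * (d:ℝ) ^ (((d:ℝ)-1)/2) :=
    mul_pos (div_pos (by positivity) hΓpos) (Real.rpow_pos_of_pos hd0 _)
  have hpart1 : (volume (S ∩ Λ)).toReal /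
      (2 * Real.pi ^ ((d : ℝ) / 2) / Real.Gamma ((d : ℝ) / 2) *
        (d : ℝ) ^ (((d : ℝ) - 1) / 2)) ≤ M.toReal := by
    rw [div_le_iff₀ hden1pos]
    calc (volume (S ∩ Λ)).toReal
        ≤ (σm Set.univ).toReal * ((Real.sqrt d ^ n) * M.toReal) := hreal
      _ = M.toReal * (2 * Real.pi ^ ((d : ℝ) / 2) / Real.Gamma ((d : ℝ) / 2) *
            (d : ℝ) ^ (((d : ℝ) - 1) / 2)) := by rw [hσR, hcRe]; ring
  refine ⟨hpart1, ?_⟩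
  -- second inequality
  have hVpos : 0 < (volume (S ∩ Λ)).toReal :=
    ENNReal.toReal_pos hS0.ne' (hvolT ▸ hVfin)
  have hMpos : 0 < M.toReal := lt_of_lt_of_le (div_pos hVpos hden1pos) hpart1
  have hMr : M.toReal ≤ r₀ := by
    have := ENNReal.toReal_mono ENNReal.ofReal_ne_top hMIcc
    rwa [ENNReal.toReal_ofReal hr₀0] at this
  have hr₀pos : 0 < r₀ := lt_of_lt_of_le hMpos hMr
  have hsplit : 2 * Real.pi ^ ((d:ℝ)/2) / Real.Gamma ((d:ℝ)/2) * (d:ℝ) ^ ((d:ℝ)/2)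
      = (2 * Real.pi ^ ((d:ℝ)/2) / Real.Gamma ((d:ℝ)/2)
          * (d:ℝ) ^ (((d:ℝ)-1)/2)) * Real.sqrt d := by
    rw [Real.sqrt_eq_rpow, mul_assoc, ← Real.rpow_add hd0]
    congr 2
    ring
  rw [hsplit, ← div_div]
  calc (volume (S ∩ Λ)).toReal /
        (2 * Real.pi ^ ((d : ℝ) / 2) / Real.Gamma ((d : ℝ) / 2) *
          (d : ℝ) ^ (((d : ℝ) - 1) / 2)) / Real.sqrt d
      ≤ M.toReal / Real.sqrt d := by gcongr
    _ ≤ M.toReal / r₀ := by gcongr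
end

section
/- Let d ≥ 1, let Ω ⊆ ℝ^d be open, and let f be a smooth function on Ω such that f and all its partial derivatives belong to L²(Ω). Suppose there exist a constant C > 0 and b ∈ ℝ₊^d such that ‖∂^α f‖_{L²(Ω)} ≤ (∏_{j=1}^d (C b_j)^{α_j}) ‖f‖_{L²(Ω)} for all multi-indices α ∈ ℕ₀^d. Let (Λ_j)_{j∈J} be a countable family of measurable subsets of Ω with Ω = ∪_{j∈J} Λ_j and such that every point of Ω lies in at most 2^{d−1} of the sets Λ_j. Call an index j ∈ J bad if there exists a multi-index α ∈ ℕ₀^d with α ≠ 0 such that ‖∂^α f‖_{L²(Λ_j)} ≥ 2^{(2d−1)/2} (∏_{j'=1}^d (3 C b_{j'})^{α_{j'}}) ‖f‖_{L²(Λ_j)}. Then ‖f‖²_{L²(∪_{j bad} Λ_j)} ≤ (1/2) ‖f‖²_{L²(Ω)}. -/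
open MeasureTheory

/-- Partial derivative in the `j`-th coordinate direction. -/
noncomputable def partialD {d : ℕ} (j : Fin d) (g : (Fin d → ℝ) → ℂ) : (Fin d → ℝ) → ℂ :=
  fun x => fderiv ℝ g x (Pi.single j 1)

/-- `n`-fold partial derivative in the `j`-th coordinate direction. -/
noncomputable def partialDIter {d : ℕ} (j : Fin d) :
    ℕ → ((Fin d → ℝ) → ℂ) → (Fin d → ℝ) → ℂ
  | 0, g => g
  | n + 1, g => partialD j (partialDIter j n g)

/-- The partial derivative `∂^α` with multi-index `α ∈ ℕ₀^d`. -/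
noncomputable def multiD {d : ℕ} (α : Fin d → ℕ) (g : (Fin d → ℝ) → ℂ) : (Fin d → ℝ) → ℂ :=
  (List.ofFn fun j : Fin d => partialDIter j (α j)).foldr (fun F h => F h) g

lemma sq_eLpNorm' {X : Type*} [MeasurableSpace X] (μ : Measure X) (g : X → ℂ) :
    eLpNorm g 2 μ ^ 2 = ∫⁻ x, (‖g x‖₊ : ENNReal) ^ 2 ∂μ := by
  rw [eLpNorm_eq_lintegral_rpow_enorm_toReal (two_ne_zero) ENNReal.ofNat_ne_top]
  rw [ENNReal.toReal_ofNat]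
  rw [← ENNReal.rpow_natCast _ 2, ← ENNReal.rpow_mul]
  norm_num
  simp only [enorm_eq_nnnorm]

lemma sq_le_aux {X : Type*} [MeasurableSpace X] (μ : Measure X) (g h : X → ℂ) (K : ℝ)
    (hK : 0 < K) (hineq : ENNReal.ofReal K * eLpNorm g 2 μ ≤ eLpNorm h 2 μ) :
    eLpNorm g 2 μ ^ 2 ≤ ((ENNReal.ofReal K)⁻¹) ^ 2 * eLpNorm h 2 μ ^ 2 := by
  have ha0 : ENNReal.ofReal K ≠ 0 := by simp [ENNReal.ofReal_eq_zero, not_le, hK]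
  have hatop : ENNReal.ofReal K ≠ ⊤ := ENNReal.ofReal_ne_top
  calc eLpNorm g 2 μ ^ 2
      = (ENNReal.ofReal K)⁻¹ ^ 2 * ((ENNReal.ofReal K) ^ 2 * eLpNorm g 2 μ ^ 2) := by
        rw [← mul_assoc, ← mul_pow, ENNReal.inv_mul_cancel ha0 hatop, one_pow, one_mul]
    _ ≤ (ENNReal.ofReal K)⁻¹ ^ 2 * eLpNorm h 2 μ ^ 2 := by
        refine mul_le_mul_right ?_ _
        rw [← mul_pow]
        exact pow_le_pow_left' hineq 2

lemma tsum_pi_pow (d : ℕ) (g : ℕ → ENNReal) :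
    ∑' α : Fin d → ℕ, ∏ j, g (α j) = (∑' k, g k) ^ d := by
  induction d with
  | zero =>
    simp only [Finset.univ_eq_empty, Finset.prod_empty, pow_zero]
    exact tsum_eq_single (fun i => i.elim0) (by intro b hb; exact absurd (Subsingleton.elim b _) hb)
  | succ n ih =>
    rw [← Equiv.tsum_eq (Fin.consEquiv (fun _ : Fin (n+1) => ℕ))]
    have : ∀ p : ℕ × (Fin n → ℕ),
        (∏ j, g ((Fin.consEquiv (fun _ : Fin (n+1) => ℕ)) p j)) =
          g p.1 * ∏ j, g (p.2 j) := by
      intro p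
      rw [Fin.prod_univ_succ]
      simp [Fin.consEquiv]
    rw [tsum_congr this,
      ENNReal.tsum_prod' (f := fun p : ℕ × (Fin n → ℕ) => g p.1 * ∏ j, g (p.2 j))]
    simp_rw [ENNReal.tsum_mul_left, ENNReal.tsum_mul_right]
    rw [ih, pow_succ]
    ring

lemma real_pow_bound (e : ℕ) : ((9:ℝ)/8) ^ (e+1) ≤ 1 + 2 ^ e := by
  induction e with
  | zero => norm_num
  | succ n ih =>
    have h2 : (1:ℝ) ≤ 2 ^ n := one_le_pow₀ (by norm_num)
    calc ((9:ℝ)/8) ^ (n+2) = (9/8) * (9/8)^(n+1) := by ring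
    _ ≤ (9/8) * (1 + 2^n) := by nlinarith
    _ ≤ 1 + 2^(n+1) := by rw [pow_succ]; nlinarith

lemma tsum_A_le (d : ℕ) (hd : 1 ≤ d) :
    ∑' a : {α : Fin d → ℕ // α ≠ 0}, ∏ j, (ENNReal.ofReal (1/9)) ^ (a.1 j)
      ≤ 2 ^ (d-1) := by
  set q : ENNReal := ENNReal.ofReal (1/9) with hq
  set F : (Fin d → ℕ) → ENNReal := fun α => ∏ j, q ^ (α j) with hF
  have hfull : ∑' α, F α = (ENNReal.ofReal (9/8)) ^ d := by
    rw [tsum_pi_pow d (fun k => q ^ k)]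
    congr 1
    rw [ENNReal.tsum_geometric]
    have h1 : (1:ENNReal) - q = ENNReal.ofReal (8/9) := by
      rw [hq, ← ENNReal.ofReal_one, ← ENNReal.ofReal_sub _ (by norm_num)]
      norm_num
    rw [h1, ← ENNReal.ofReal_inv_of_pos (by norm_num)]
    norm_num
  have hsplit : ∑' α, F α = F 0 + ∑' a : {α : Fin d → ℕ // α ≠ 0}, F a.1 := by
    rw [ENNReal.tsum_eq_add_tsum_ite 0]
    congr 1
    refine (tsum_congr fun α => ?_).trans (tsum_subtype {α : Fin d → ℕ | α ≠ 0} F).symm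
    by_cases h : α = 0 <;> simp [Set.indicator, h]
  have hF0 : F 0 = 1 := by simp [hF]
  have hle : (ENNReal.ofReal (9/8)) ^ d ≤ 1 + 2 ^ (d-1) := by
    rw [← ENNReal.ofReal_pow (by norm_num)]
    have : ((1:ENNReal) + 2 ^ (d-1)) = ENNReal.ofReal (1 + 2 ^ (d-1)) := by
      rw [ENNReal.ofReal_add (by norm_num) (by positivity), ENNReal.ofReal_one,
        ENNReal.ofReal_pow (by norm_num)]
      norm_num
    rw [this]
    apply ENNReal.ofReal_le_ofReal
    obtain ⟨e, rfl⟩ : ∃ e, d = e + 1 := ⟨d - 1, (Nat.succ_pred_eq_of_pos hd).symm⟩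
    simpa using real_pow_bound e
  have := hsplit ▸ (hfull ▸ hle)
  rwa [hF0, ENNReal.add_le_add_iff_left ENNReal.one_ne_top] at this

lemma measurable_partialDIter {d : ℕ} (j : Fin d) (n : ℕ) (g : (Fin d → ℝ) → ℂ)
    (hg : Measurable g) : Measurable (partialDIter j n g) := by
  induction n with
  | zero => exact hg
  | succ m ih => exact measurable_fderiv_apply_const ℝ _ _

lemma measurable_multiD_of_ne {d : ℕ} (α : Fin d → ℕ) (hα : α ≠ 0) (g : (Fin d → ℝ) → ℂ) :
    Measurable (multiD α g) := by
  unfold multiD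
  obtain ⟨j₀, hj₀⟩ : ∃ j, α j ≠ 0 := by
    by_contra h
    push_neg at h
    exact hα (funext fun j => h j)
  have main : ∀ (l : List (Fin d)) (h : (Fin d → ℝ) → ℂ), (∃ j ∈ l, α j ≠ 0) →
      Measurable ((l.map fun j => partialDIter j (α j)).foldr (fun F h => F h) h) := by
    intro l
    induction l with
    | nil => rintro h ⟨j, hj, _⟩; exact absurd hj List.not_mem_nil
    | cons a t ih =>
      rintro h ⟨j, hj, hjne⟩
      simp only [List.map_cons, List.foldr_cons]
      by_cases ha : α a = 0
      · have hjt : j ∈ t := by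
          rcases List.mem_cons.mp hj with rfl | hjt
          · exact absurd ha hjne
          · exact hjt
        have := ih h ⟨j, hjt, hjne⟩
        rw [ha]
        exact this
      · obtain ⟨m, hm⟩ := Nat.exists_eq_succ_of_ne_zero ha
        rw [hm]
        exact measurable_fderiv_apply_const ℝ _ _
  simpa [List.ofFn_eq_map] using main (List.finRange d) g ⟨j₀, List.mem_finRange j₀, hj₀⟩

lemma overlap_bound' {d : ℕ} (Ω : Set (Fin d → ℝ)) (hΩm : MeasurableSet Ω)
    (Λ : ℕ → Set (Fin d → ℝ))
    (hΛm : ∀ n, MeasurableSet (Λ n)) (hsub : ∀ n, Λ n ⊆ Ω)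
    (hoverlap : ∀ x : Fin d → ℝ, Set.encard {n : ℕ | x ∈ Λ n} ≤ 2 ^ (d - 1))
    (g : (Fin d → ℝ) → ENNReal) (hg : Measurable g) :
    ∑' n, ∫⁻ x in Λ n, g x ≤ 2 ^ (d-1) * ∫⁻ x in Ω, g x := by
  have h1 : ∀ n, ∫⁻ x in Λ n, g x = ∫⁻ x, (Λ n).indicator g x := by
    intro n; rw [lintegral_indicator (hΛm n)]
  simp_rw [h1]
  rw [← lintegral_tsum (fun n => (hg.indicator (hΛm n)).aemeasurable)]
  calc ∫⁻ x, ∑' n, (Λ n).indicator g x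
      ≤ ∫⁻ x, 2 ^ (d-1) * Ω.indicator g x := by
        apply lintegral_mono
        intro x
        show ∑' n, (Λ n).indicator g x ≤ 2 ^ (d-1) * Ω.indicator g x
        have hpt : ∀ n, (Λ n).indicator g x
            = ({m : ℕ | x ∈ Λ m}).indicator (fun _ => g x) n := by
          intro n; rfl
        rw [tsum_congr hpt, ← tsum_subtype, ENNReal.tsum_set_const]
        by_cases hx : x ∈ Ω
        · rw [Set.indicator_of_mem hx]
          refine mul_le_mul_left ?_ _
          calc ({m : ℕ | x ∈ Λ m}.encard : ENNReal)
              ≤ ((2 ^ (d-1) : ℕ∞) : ENNReal) := by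
                exact_mod_cast ENat.toENNReal_le.mpr (hoverlap x)
            _ = 2 ^ (d-1) := by simp
        · have : {m : ℕ | x ∈ Λ m} = ∅ := by
            ext m; simp only [Set.mem_setOf_eq, Set.mem_empty_iff_false, iff_false]
            exact fun hm => hx (hsub m hm)
          simp [this]
    _ = 2 ^ (d-1) * ∫⁻ x in Ω, g x := by
        rw [lintegral_const_mul _ (hg.indicator hΩm), lintegral_indicator hΩm]

lemma real_id (d : ℕ) (hd : 1 ≤ d) (C : ℝ) (hC : 0 < C) (b : Fin d → ℝ) (hb : ∀ j, 0 < b j)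
    (α : Fin d → ℕ) :
    ((∏ j, (C * b j) ^ (α j)) / (2 ^ ((2*(d:ℝ)-1)/2) * ∏ j, (3*C*b j) ^ (α j))) ^ 2
        * (2:ℝ) ^ (d-1) =
      (2:ℝ) ^ (-(d:ℝ)) * ∏ j, ((1:ℝ)/9) ^ (α j) := by
  have h1 : (∏ j, (C * b j) ^ (α j)) / (2 ^ ((2*(d:ℝ)-1)/2) * ∏ j, (3*C*b j) ^ (α j))
      = (2:ℝ) ^ (-((2*(d:ℝ)-1)/2)) * ∏ j, ((1:ℝ)/3) ^ (α j) := by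
    rw [Real.rpow_neg (by norm_num)]
    rw [mul_comm ((2:ℝ) ^ ((2*(d:ℝ)-1)/2)) _, ← div_div, div_eq_mul_inv, mul_comm]
    congr 1
    rw [← Finset.prod_div_distrib]
    refine Finset.prod_congr rfl fun j _ => ?_
    rw [← div_pow]
    congr 1
    have h3 : (3:ℝ) * C * b j ≠ 0 := ne_of_gt (by have := hb j; positivity)
    have hbj : b j ≠ 0 := (hb j).ne'
    field_simp
  rw [h1, mul_pow, ← Finset.prod_pow]
  have h2 : ∀ j, (((1:ℝ)/3) ^ (α j)) ^ 2 = ((1:ℝ)/9) ^ (α j) := by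
    intro j
    rw [← pow_mul, mul_comm, pow_mul]
    norm_num
  rw [Finset.prod_congr rfl fun j _ => h2 j]
  have h3 : ((2:ℝ) ^ (-((2*(d:ℝ)-1)/2))) ^ 2 * (2:ℝ) ^ (d-1) = (2:ℝ) ^ (-(d:ℝ)) := by
    rw [← Real.rpow_natCast ((2:ℝ) ^ (-((2*(d:ℝ)-1)/2))) 2, ← Real.rpow_mul (by norm_num)]
    have hd1 : ((d-1 : ℕ) : ℝ) = (d:ℝ) - 1 := by
      rw [Nat.cast_sub hd]; norm_num
    rw [← Real.rpow_natCast (2:ℝ) (d-1), hd1, ← Real.rpow_add (by norm_num)]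
    congr 1
    push_cast
    ring
  rw [mul_right_comm, h3]

lemma ennreal_combine (K P : ℝ) (hK : 0 < K) (hP : 0 ≤ P) (d : ℕ) :
    ((ENNReal.ofReal K)⁻¹) ^ 2 * (2 ^ (d-1) * (ENNReal.ofReal P) ^ 2)
      = ENNReal.ofReal ((P/K) ^ 2 * (2:ℝ) ^ (d-1)) := by
  have h2 : (2:ENNReal) ^ (d-1) = ENNReal.ofReal ((2:ℝ) ^ (d-1)) := by
    rw [ENNReal.ofReal_pow (by norm_num)]
    norm_num
  rw [← ENNReal.ofReal_inv_of_pos hK, h2,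
    ← ENNReal.ofReal_pow (by positivity), ← ENNReal.ofReal_pow hP,
    ← ENNReal.ofReal_mul (by positivity), ← ENNReal.ofReal_mul (by positivity)]
  congr 1
  rw [div_pow]
  field_simp

lemma constsum_le' (d : ℕ) (hd : 1 ≤ d) (C : ℝ) (hC : 0 < C) (b : Fin d → ℝ)
    (hb : ∀ j, 0 < b j) :
    ∑' a : {α : Fin d → ℕ // α ≠ 0},
      ((ENNReal.ofReal (2 ^ ((2*(d:ℝ)-1)/2) * ∏ j, (3*C*b j) ^ (a.1 j)))⁻¹) ^ 2 *
        (2 ^ (d-1) * (ENNReal.ofReal (∏ j, (C*b j) ^ (a.1 j))) ^ 2) ≤ 1/2 := by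
  have hCb : ∀ j, (0:ℝ) < C * b j := fun j => mul_pos hC (hb j)
  have h3Cb : ∀ j, (0:ℝ) < 3 * C * b j := fun j => mul_pos (by linarith) (hb j)
  have hterm : ∀ a : {α : Fin d → ℕ // α ≠ 0},
      ((ENNReal.ofReal (2 ^ ((2*(d:ℝ)-1)/2) * ∏ j, (3*C*b j) ^ (a.1 j)))⁻¹) ^ 2 *
        (2 ^ (d-1) * (ENNReal.ofReal (∏ j, (C*b j) ^ (a.1 j))) ^ 2)
      = ENNReal.ofReal ((2:ℝ) ^ (-(d:ℝ))) * ∏ j, (ENNReal.ofReal (1/9)) ^ (a.1 j) := by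
    rintro ⟨α, hα⟩
    have hK : (0:ℝ) < 2 ^ ((2*(d:ℝ)-1)/2) * ∏ j, (3*C*b j) ^ (α j) :=
      mul_pos (Real.rpow_pos_of_pos two_pos _)
        (Finset.prod_pos fun j _ => pow_pos (h3Cb j) _)
    have hP : (0:ℝ) ≤ ∏ j, (C*b j) ^ (α j) :=
      le_of_lt (Finset.prod_pos fun j _ => pow_pos (hCb j) _)
    rw [ennreal_combine _ _ hK hP d, real_id d hd C hC b hb α,
      ENNReal.ofReal_mul (by positivity),
      ENNReal.ofReal_prod_of_nonneg (fun j _ => by positivity)]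
    congr 1
    refine Finset.prod_congr rfl fun j _ => ?_
    rw [ENNReal.ofReal_pow (by norm_num)]
  rw [tsum_congr hterm, ENNReal.tsum_mul_left]
  calc ENNReal.ofReal ((2:ℝ) ^ (-(d:ℝ))) *
        ∑' a : {α : Fin d → ℕ // α ≠ 0}, ∏ j, (ENNReal.ofReal (1/9)) ^ (a.1 j)
      ≤ ENNReal.ofReal ((2:ℝ) ^ (-(d:ℝ))) * 2 ^ (d-1) :=
        mul_le_mul_right (tsum_A_le d hd) _
    _ = 1/2 := by
        have h1 : (2:ℝ) ^ (-(d:ℝ)) = (((2:ℝ) ^ (d:ℕ)))⁻¹ := by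
          rw [← Real.rpow_natCast (2:ℝ) d, ← Real.rpow_neg (by norm_num)]
        rw [h1, ENNReal.ofReal_inv_of_pos (by positivity), ENNReal.ofReal_pow (by norm_num)]
        have h2 : ENNReal.ofReal (2:ℝ) = 2 := by norm_num
        rw [h2]
        obtain ⟨e, rfl⟩ : ∃ e, d = e + 1 := ⟨d - 1, (Nat.succ_pred_eq_of_pos hd).symm⟩
        simp only [Nat.add_sub_cancel, pow_succ]
        rw [ENNReal.mul_inv (Or.inl (by positivity)) (Or.inl (by simp))]
        rw [mul_comm ((2:ENNReal)^e)⁻¹ _, mul_assoc,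
          ENNReal.inv_mul_cancel (by positivity) (by simp)]
        rw [mul_one, one_div]

lemma main_aux (d : ℕ) (hd : 1 ≤ d) (Ω : Set (Fin d → ℝ)) (hΩm : MeasurableSet Ω)
    (f : (Fin d → ℝ) → ℂ) (D : (Fin d → ℕ) → (Fin d → ℝ) → ℂ)
    (hDm : ∀ α : Fin d → ℕ, α ≠ 0 → Measurable (D α))
    (C : ℝ) (hC : 0 < C) (b : Fin d → ℝ) (hb : ∀ j, 0 < b j)
    (hBern : ∀ α : Fin d → ℕ,
      eLpNorm (D α) 2 (volume.restrict Ω) ≤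
        ENNReal.ofReal (∏ j, (C * b j) ^ (α j)) * eLpNorm f 2 (volume.restrict Ω))
    (Λ : ℕ → Set (Fin d → ℝ)) (hΛm : ∀ n, MeasurableSet (Λ n)) (hsub : ∀ n, Λ n ⊆ Ω)
    (hoverlap : ∀ x : Fin d → ℝ, Set.encard {n : ℕ | x ∈ Λ n} ≤ 2 ^ (d - 1))
    (B : Set ℕ)
    (hbad : ∀ n ∈ B, ∃ α : Fin d → ℕ, α ≠ 0 ∧
      ENNReal.ofReal (2 ^ ((2*(d:ℝ)-1)/2) * ∏ j, (3*C*b j) ^ (α j)) *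
          eLpNorm f 2 (volume.restrict (Λ n)) ≤
        eLpNorm (D α) 2 (volume.restrict (Λ n))) :
    eLpNorm f 2 (volume.restrict (⋃ n ∈ B, Λ n)) ^ 2 ≤
      (1/2 : ENNReal) * eLpNorm f 2 (volume.restrict Ω) ^ 2 := by
  have hCb : ∀ j, (0:ℝ) < C * b j := fun j => mul_pos hC (hb j)
  have h3Cb : ∀ j, (0:ℝ) < 3 * C * b j := fun j => mul_pos (by linarith) (hb j)
  have hKpos : ∀ α : Fin d → ℕ, (0:ℝ) < 2 ^ ((2*(d:ℝ)-1)/2) * ∏ j, (3*C*b j) ^ (α j) :=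
    fun α => mul_pos (Real.rpow_pos_of_pos two_pos _)
      (Finset.prod_pos fun j _ => pow_pos (h3Cb j) _)
  have step2 : ∀ n : B, (∫⁻ x in Λ (n:ℕ), (‖f x‖₊ : ENNReal) ^ 2) ≤
      ∑' a : {α : Fin d → ℕ // α ≠ 0},
        ((ENNReal.ofReal (2 ^ ((2*(d:ℝ)-1)/2) * ∏ j, (3*C*b j) ^ (a.1 j)))⁻¹) ^ 2 *
          ∫⁻ x in Λ (n:ℕ), (‖D a.1 x‖₊ : ENNReal) ^ 2 := by
    rintro ⟨n, hn⟩
    obtain ⟨α, hα0, hineq⟩ := hbad n hn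
    have key := sq_le_aux (volume.restrict (Λ n)) f (D α) _ (hKpos α) hineq
    rw [sq_eLpNorm', sq_eLpNorm'] at key
    refine key.trans ?_
    exact ENNReal.le_tsum (f := fun a : {α : Fin d → ℕ // α ≠ 0} =>
      ((ENNReal.ofReal (2 ^ ((2*(d:ℝ)-1)/2) * ∏ j, (3*C*b j) ^ (a.1 j)))⁻¹) ^ 2 *
        ∫⁻ x in Λ n, (‖D a.1 x‖₊ : ENNReal) ^ 2) ⟨α, hα0⟩
  have bern : ∀ α : Fin d → ℕ, (∫⁻ x in Ω, (‖D α x‖₊ : ENNReal) ^ 2) ≤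
      (ENNReal.ofReal (∏ j, (C * b j) ^ (α j))) ^ 2 *
        ∫⁻ x in Ω, (‖f x‖₊ : ENNReal) ^ 2 := by
    intro α
    rw [← sq_eLpNorm', ← sq_eLpNorm', ← mul_pow]
    exact pow_le_pow_left' (hBern α) 2
  have hover : ∀ a : {α : Fin d → ℕ // α ≠ 0},
      (∑' n : B, ∫⁻ x in Λ (n:ℕ), (‖D a.1 x‖₊ : ENNReal) ^ 2) ≤
        2 ^ (d-1) * ∫⁻ x in Ω, (‖D a.1 x‖₊ : ENNReal) ^ 2 := by
    intro a
    refine le_trans ?_ (overlap_bound' Ω hΩm Λ hΛm hsub hoverlap _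
      (((hDm a.1 a.2).nnnorm.coe_nnreal_ennreal).pow_const 2))
    exact ENNReal.tsum_comp_le_tsum_of_injective Subtype.val_injective _
  calc eLpNorm f 2 (volume.restrict (⋃ n ∈ B, Λ n)) ^ 2
      = ∫⁻ x in ⋃ n ∈ B, Λ n, (‖f x‖₊ : ENNReal) ^ 2 := sq_eLpNorm' _ _
    _ ≤ ∑' n : B, ∫⁻ x in Λ (n:ℕ), (‖f x‖₊ : ENNReal) ^ 2 := by
        rw [Set.biUnion_eq_iUnion]
        exact lintegral_iUnion_le _ _
    _ ≤ ∑' n : B, ∑' a : {α : Fin d → ℕ // α ≠ 0},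
          ((ENNReal.ofReal (2 ^ ((2*(d:ℝ)-1)/2) * ∏ j, (3*C*b j) ^ (a.1 j)))⁻¹) ^ 2 *
            ∫⁻ x in Λ (n:ℕ), (‖D a.1 x‖₊ : ENNReal) ^ 2 :=
        ENNReal.tsum_le_tsum step2
    _ = ∑' a : {α : Fin d → ℕ // α ≠ 0}, ∑' n : B,
          ((ENNReal.ofReal (2 ^ ((2*(d:ℝ)-1)/2) * ∏ j, (3*C*b j) ^ (a.1 j)))⁻¹) ^ 2 *
            ∫⁻ x in Λ (n:ℕ), (‖D a.1 x‖₊ : ENNReal) ^ 2 :=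
        ENNReal.tsum_comm
    _ = ∑' a : {α : Fin d → ℕ // α ≠ 0},
          ((ENNReal.ofReal (2 ^ ((2*(d:ℝ)-1)/2) * ∏ j, (3*C*b j) ^ (a.1 j)))⁻¹) ^ 2 *
            ∑' n : B, ∫⁻ x in Λ (n:ℕ), (‖D a.1 x‖₊ : ENNReal) ^ 2 := by
        simp_rw [ENNReal.tsum_mul_left]
    _ ≤ ∑' a : {α : Fin d → ℕ // α ≠ 0},
          ((ENNReal.ofReal (2 ^ ((2*(d:ℝ)-1)/2) * ∏ j, (3*C*b j) ^ (a.1 j)))⁻¹) ^ 2 *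
            (2 ^ (d-1) * ((ENNReal.ofReal (∏ j, (C * b j) ^ (a.1 j))) ^ 2 *
              ∫⁻ x in Ω, (‖f x‖₊ : ENNReal) ^ 2)) := by
        refine ENNReal.tsum_le_tsum fun a => mul_le_mul_right ?_ _
        exact le_trans (hover a) (mul_le_mul_right (bern a.1) _)
    _ = (∑' a : {α : Fin d → ℕ // α ≠ 0},
          ((ENNReal.ofReal (2 ^ ((2*(d:ℝ)-1)/2) * ∏ j, (3*C*b j) ^ (a.1 j)))⁻¹) ^ 2 *
            (2 ^ (d-1) * (ENNReal.ofReal (∏ j, (C * b j) ^ (a.1 j))) ^ 2)) *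
          ∫⁻ x in Ω, (‖f x‖₊ : ENNReal) ^ 2 := by
        rw [← ENNReal.tsum_mul_right]
        congr 1
        funext a
        ring
    _ ≤ (1/2) * ∫⁻ x in Ω, (‖f x‖₊ : ENNReal) ^ 2 :=
        mul_le_mul_left (constsum_le' d hd C hC b hb) _
    _ = (1/2) * eLpNorm f 2 (volume.restrict Ω) ^ 2 := by rw [sq_eLpNorm']

/-- the bad cubes carry at most half of the `L²` mass. -/
theorem stmt_10 (d : ℕ) (hd : 1 ≤ d) (Ω : Set (Fin d → ℝ)) (hΩ : IsOpen Ω)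
    (f : (Fin d → ℝ) → ℂ) (hf : ContDiffOn ℝ (⊤ : ℕ∞) f Ω)
    (hL2 : ∀ α : Fin d → ℕ, MemLp (multiD α f) 2 (volume.restrict Ω))
    (C : ℝ) (hC : 0 < C) (b : Fin d → ℝ) (hb : ∀ j, 0 < b j)
    (hBern : ∀ α : Fin d → ℕ,
      eLpNorm (multiD α f) 2 (volume.restrict Ω) ≤
        ENNReal.ofReal (∏ j, (C * b j) ^ (α j)) * eLpNorm f 2 (volume.restrict Ω))
    (Λ : ℕ → Set (Fin d → ℝ)) (hΛm : ∀ n, MeasurableSet (Λ n))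
    (hcover : Ω = ⋃ n, Λ n)
    (hoverlap : ∀ x : Fin d → ℝ, Set.encard {n : ℕ | x ∈ Λ n} ≤ 2 ^ (d - 1)) :
    eLpNorm f 2 (volume.restrict
        (⋃ n ∈ {n : ℕ | ∃ α : Fin d → ℕ, α ≠ 0 ∧
          ENNReal.ofReal (2 ^ ((2 * (d : ℝ) - 1) / 2) * ∏ j, (3 * C * b j) ^ (α j)) *
              eLpNorm f 2 (volume.restrict (Λ n)) ≤
            eLpNorm (multiD α f) 2 (volume.restrict (Λ n))}, Λ n)) ^ 2 ≤
      (1 / 2 : ENNReal) * eLpNorm f 2 (volume.restrict Ω) ^ 2 := by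
  exact main_aux d hd Ω hΩ.measurableSet f (fun α => multiD α f)
    (fun α hα => measurable_multiD_of_ne α hα f) C hC b hb hBern Λ hΛm
    (fun n => hcover ▸ Set.subset_iUnion Λ n) hoverlap _ (fun n hn => hn)
end

section
/- Let d ≥ 1, let Λ ⊂ ℝ^d be a closed axis-parallel cube with side length 1, let C > 0 and b ∈ ℝ₊^d, and let f be a smooth function on an open neighborhood of Λ with ‖f‖_{L²(Λ)} > 0 that satisfies, for every multi-index α ∈ ℕ₀^d, the bound ‖∂^α f‖_{L²(Λ)} < 2^{(2d−1)/2} (∏_{j=1}^d (3 C b_j)^{α_j}) ‖f‖_{L²(Λ)}. Then there exists a point x ∈ Λ such that |∂^α f(x)| ≤ 2^{(3d−1)/2} (∏_{j=1}^d (9 C b_j)^{α_j}) ‖f‖_{L²(Λ)} for all multi-indices α ∈ ℕ₀^d. -/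
open MeasureTheory
open scoped ENNReal NNReal

lemma contDiffOn_partialD {d : ℕ} {U : Set (Fin d → ℝ)} (hU : IsOpen U)
    {g : (Fin d → ℝ) → ℂ} (hg : ContDiffOn ℝ (⊤ : ℕ∞) g U) (j : Fin d) :
    ContDiffOn ℝ (⊤ : ℕ∞) (partialD j g) U := by
  have h1 : ContDiffOn ℝ (⊤ : ℕ∞) (fderiv ℝ g) U :=
    hg.fderiv_of_isOpen hU (le_of_eq rfl)
  exact ((ContinuousLinearMap.apply ℝ ℂ (Pi.single j 1)).contDiff.comp_contDiffOn h1)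

lemma contDiffOn_partialDIter {d : ℕ} {U : Set (Fin d → ℝ)} (hU : IsOpen U)
    (j : Fin d) (n : ℕ) {g : (Fin d → ℝ) → ℂ} (hg : ContDiffOn ℝ (⊤ : ℕ∞) g U) :
    ContDiffOn ℝ (⊤ : ℕ∞) (partialDIter j n g) U := by
  induction n generalizing g with
  | zero => exact hg
  | succ n ih => exact contDiffOn_partialD hU (ih hg) j

lemma contDiffOn_multiD {d : ℕ} {U : Set (Fin d → ℝ)} (hU : IsOpen U)
    (α : Fin d → ℕ) {g : (Fin d → ℝ) → ℂ} (hg : ContDiffOn ℝ (⊤ : ℕ∞) g U) :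
    ContDiffOn ℝ (⊤ : ℕ∞) (multiD α g) U := by
  unfold multiD
  have : ∀ (l : List (((Fin d → ℝ) → ℂ) → ((Fin d → ℝ) → ℂ))),
      (∀ F ∈ l, ∀ h : (Fin d → ℝ) → ℂ, ContDiffOn ℝ (⊤ : ℕ∞) h U →
        ContDiffOn ℝ (⊤ : ℕ∞) (F h) U) →
      ContDiffOn ℝ (⊤ : ℕ∞) (l.foldr (fun F h => F h) g) U := by
    intro l hl
    induction l with
    | nil => exact hg
    | cons F l ih =>
      exact hl F List.mem_cons_self _ (ih fun F' hF' => hl F' (List.mem_cons_of_mem _ hF'))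
  apply this
  intro F hF h hh
  obtain ⟨j, rfl⟩ := List.mem_ofFn.1 hF
  exact contDiffOn_partialDIter hU j (α j) hh

lemma tsum_pi_prod (d : ℕ) (g : ℕ → ℝ≥0∞) :
    ∑' α : Fin d → ℕ, ∏ j, g (α j) = (∑' n, g n) ^ d := by
  induction d with
  | zero =>
    rw [tsum_eq_single (default : Fin 0 → ℕ) (fun b hb => absurd (Subsingleton.elim b default) hb)]
    simp
  | succ d ih =>
    rw [← (Fin.consEquiv (fun _ : Fin (d + 1) => ℕ)).tsum_eq]
    have hterm : ∀ c : ℕ × (Fin d → ℕ),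
        (∏ j : Fin (d + 1), g ((Fin.consEquiv fun _ => ℕ) c j)) =
          g c.1 * ∏ j : Fin d, g (c.2 j) := by
      intro c
      simp [Fin.consEquiv, Fin.prod_univ_succ]
    simp only [hterm]
    rw [show (∑' (c : ℕ × (Fin d → ℕ)), g c.1 * ∏ j : Fin d, g (c.2 j))
        = ∑' (a : ℕ), ∑' (β : Fin d → ℕ), g a * ∏ j : Fin d, g (β j) from ENNReal.tsum_prod (f := fun (a : ℕ) (β : Fin d → ℕ) => g a * ∏ j : Fin d, g (β j))]
    simp only [ENNReal.tsum_mul_left]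
    rw [ENNReal.tsum_mul_right, ih, pow_succ, mul_comm]

lemma multiD_zero {d : ℕ} (g : (Fin d → ℝ) → ℂ) : multiD (0 : Fin d → ℕ) g = g := by
  unfold multiD
  have : ∀ l : List (((Fin d → ℝ) → ℂ) → ((Fin d → ℝ) → ℂ)),
      (∀ F ∈ l, ∀ h : (Fin d → ℝ) → ℂ, F h = h) → l.foldr (fun F h => F h) g = g := by
    intro l hl
    induction l with
    | nil => rfl
    | cons F l ih =>
      rw [List.foldr_cons, ih fun F' hF' => hl F' (List.mem_cons_of_mem _ hF'),
        hl F List.mem_cons_self]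
  apply this
  intro F hF h
  obtain ⟨j, rfl⟩ := List.mem_ofFn.1 hF
  rfl

/-- on a good cube there is a point where all derivatives are
pointwise controlled. -/
theorem stmt_11 (d : ℕ) (hd : 1 ≤ d) (c : Fin d → ℝ)
    (Λ : Set (Fin d → ℝ)) (hΛ : Λ = Set.univ.pi fun j => Set.Icc (c j) (c j + 1))
    (U : Set (Fin d → ℝ)) (hU : IsOpen U) (hΛU : Λ ⊆ U)
    (f : (Fin d → ℝ) → ℂ) (hf : ContDiffOn ℝ (⊤ : ℕ∞) f U)
    (C : ℝ) (hC : 0 < C) (b : Fin d → ℝ) (hb : ∀ j, 0 < b j)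
    (hfpos : 0 < eLpNorm f 2 (volume.restrict Λ))
    (hgood : ∀ α : Fin d → ℕ,
      eLpNorm (multiD α f) 2 (volume.restrict Λ) <
        ENNReal.ofReal (2 ^ ((2 * (d : ℝ) - 1) / 2) * ∏ j, (3 * C * b j) ^ (α j)) *
          eLpNorm f 2 (volume.restrict Λ)) :
    ∃ x ∈ Λ, ∀ α : Fin d → ℕ,
      ‖multiD α f x‖ ≤
        2 ^ ((3 * (d : ℝ) - 1) / 2) * (∏ j, (9 * C * b j) ^ (α j)) *
          (eLpNorm f 2 (volume.restrict Λ)).toReal := by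
  have hΛmeas : MeasurableSet Λ := by
    rw [hΛ]; exact MeasurableSet.univ_pi fun j => measurableSet_Icc
  have hmeas : ∀ α : Fin d → ℕ,
      AEStronglyMeasurable (multiD α f) (volume.restrict Λ) := fun α =>
    (((contDiffOn_multiD hU α hf).continuousOn).mono hΛU).aestronglyMeasurable hΛmeas
  -- positivity facts
  have h3 : ∀ (α : Fin d → ℕ), (0:ℝ) < ∏ j, (3 * C * b j) ^ (α j) :=
    fun α => Finset.prod_pos fun j _ => pow_pos (by nlinarith [hb j]) _
  have h9 : ∀ (α : Fin d → ℕ), (0:ℝ) < ∏ j, (9 * C * b j) ^ (α j) :=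
    fun α => Finset.prod_pos fun j _ => pow_pos (by nlinarith [hb j]) _
  have hA : (0:ℝ) < 2 ^ ((2 * (d : ℝ) - 1) / 2) := Real.rpow_pos_of_pos two_pos _
  have hB : (0:ℝ) < 2 ^ ((3 * (d : ℝ) - 1) / 2) := Real.rpow_pos_of_pos two_pos _
  -- finiteness of ‖f‖₂
  have hfin : eLpNorm f 2 (volume.restrict Λ) ≠ ⊤ := by
    intro h
    have h0 := hgood 0
    rw [multiD_zero, h, ENNReal.mul_top (ENNReal.ofReal_pos.2 (mul_pos hA (h3 0))).ne'] at h0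
    exact lt_irrefl _ h0
  set N := (eLpNorm f 2 (volume.restrict Λ)).toReal with hNdef
  have hN : 0 < N := ENNReal.toReal_pos hfpos.ne' hfin
  have hfeq : eLpNorm f 2 (volume.restrict Λ) = ENNReal.ofReal N :=
    (ENNReal.ofReal_toReal hfin).symm
  set T : (Fin d → ℕ) → ℝ :=
    fun α => 2 ^ ((3 * (d : ℝ) - 1) / 2) * (∏ j, (9 * C * b j) ^ (α j)) * N with hTdef
  have hT : ∀ α, 0 < T α := fun α => mul_pos (mul_pos hB (h9 α)) hN
  set M : (Fin d → ℕ) → ℝ :=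
    fun α => 2 ^ ((2 * (d : ℝ) - 1) / 2) * ∏ j, (3 * C * b j) ^ (α j) with hMdef
  have hM : ∀ α, 0 < M α := fun α => mul_pos hA (h3 α)
  set E : (Fin d → ℕ) → Set (Fin d → ℝ) :=
    fun α => {x | ENNReal.ofReal (T α) ≤ (‖multiD α f x‖₊ : ℝ≥0∞)} with hEdef
  -- the key real computation
  have key : ∀ α : Fin d → ℕ,
      (T α)⁻¹ ^ (2:ℕ) * (M α * N) ^ (2:ℕ) = (1/2 : ℝ) ^ d * ∏ j, (1/9 : ℝ) ^ (α j) := by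
    intro α
    have hA2B2 : ((2:ℝ) ^ ((2 * (d : ℝ) - 1) / 2)) ^ (2:ℕ) /
        ((2:ℝ) ^ ((3 * (d : ℝ) - 1) / 2)) ^ (2:ℕ) = (1/2 : ℝ) ^ d := by
      rw [← Real.rpow_natCast ((2:ℝ) ^ ((2 * (d : ℝ) - 1) / 2)) 2,
        ← Real.rpow_natCast ((2:ℝ) ^ ((3 * (d : ℝ) - 1) / 2)) 2,
        ← Real.rpow_mul two_pos.le, ← Real.rpow_mul two_pos.le, ← Real.rpow_sub two_pos,
        show (2 * (d : ℝ) - 1) / 2 * ((2:ℕ):ℝ) - (3 * (d : ℝ) - 1) / 2 * ((2:ℕ):ℝ)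
          = -(d : ℝ) by push_cast; ring,
        Real.rpow_neg two_pos.le, Real.rpow_natCast, one_div, inv_pow]
    have hP2Q2 : (∏ j, (3 * C * b j) ^ (α j)) ^ (2:ℕ) /
        (∏ j, (9 * C * b j) ^ (α j)) ^ (2:ℕ) = ∏ j, (1/9 : ℝ) ^ (α j) := by
      rw [← Finset.prod_pow, ← Finset.prod_pow, ← Finset.prod_div_distrib]
      refine Finset.prod_congr rfl fun j _ => ?_
      rw [← pow_right_comm, ← pow_right_comm ((9:ℝ) * C * b j), ← div_pow,
        show ((3:ℝ) * C * b j) ^ (2:ℕ) / ((9:ℝ) * C * b j) ^ (2:ℕ) = 1/9 by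
          rw [div_eq_div_iff (pow_pos (by nlinarith [hb j] : (0:ℝ) < 9 * C * b j) 2).ne' (by norm_num : (9:ℝ) ≠ 0)]
          nlinarith [hb j]]
    rw [← hA2B2, ← hP2Q2, hTdef, hMdef]
    have hBne : ((2:ℝ) ^ ((3 * (d : ℝ) - 1) / 2)) ≠ 0 := hB.ne'
    have hQne : (∏ j, (9 * C * b j) ^ (α j)) ≠ 0 := (h9 α).ne'
    field_simp
  -- Chebyshev bound for each bad set
  have cheb : ∀ α, (volume.restrict Λ) (E α) ≤
      (2⁻¹ : ℝ≥0∞) ^ d * ∏ j, (9⁻¹ : ℝ≥0∞) ^ (α j) := by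
    intro α
    have h1 := meas_ge_le_mul_pow_eLpNorm_enorm (volume.restrict Λ) two_ne_zero
      ENNReal.ofNat_ne_top (hmeas α) (ε := ENNReal.ofReal (T α))
      (ENNReal.ofReal_pos.2 (hT α)).ne' (fun h => absurd h ENNReal.ofReal_ne_top)
    rw [ENNReal.toReal_ofNat] at h1
    refine h1.trans ?_
    have h2 : eLpNorm (multiD α f) 2 (volume.restrict Λ) ≤ ENNReal.ofReal (M α * N) := by
      refine (hgood α).le.trans ?_
      rw [hfeq, ← ENNReal.ofReal_mul (hM α).le]
    calc (ENNReal.ofReal (T α))⁻¹ ^ (2:ℝ) * eLpNorm (multiD α f) 2 (volume.restrict Λ) ^ (2:ℝ)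
        ≤ (ENNReal.ofReal (T α))⁻¹ ^ (2:ℝ) * (ENNReal.ofReal (M α * N)) ^ (2:ℝ) :=
          mul_le_mul_right (ENNReal.rpow_le_rpow h2 (by norm_num)) _
      _ = ENNReal.ofReal ((T α)⁻¹ ^ (2:ℝ) * (M α * N) ^ (2:ℝ)) := by
          rw [← ENNReal.ofReal_inv_of_pos (hT α),
            ENNReal.ofReal_rpow_of_pos (inv_pos.2 (hT α)),
            ENNReal.ofReal_rpow_of_pos (mul_pos (hM α) hN),
            ← ENNReal.ofReal_mul (Real.rpow_nonneg (inv_pos.2 (hT α)).le _)]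
      _ = ENNReal.ofReal ((1/2 : ℝ) ^ d * ∏ j, (1/9 : ℝ) ^ (α j)) := by
          rw [show ((T α)⁻¹ ^ (2:ℝ) * (M α * N) ^ (2:ℝ))
              = ((T α)⁻¹ ^ (2:ℕ) * (M α * N) ^ (2:ℕ)) from by
            rw [← Real.rpow_natCast ((T α)⁻¹) 2, ← Real.rpow_natCast (M α * N) 2]
            norm_num, key α]
      _ = (2⁻¹ : ℝ≥0∞) ^ d * ∏ j, (9⁻¹ : ℝ≥0∞) ^ (α j) := by
          rw [ENNReal.ofReal_mul (by positivity), ENNReal.ofReal_pow (by norm_num),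
            ENNReal.ofReal_prod_of_nonneg (fun j _ => by positivity)]
          congr 1
          · norm_num [ENNReal.ofReal_div_of_pos]
          · refine Finset.prod_congr rfl fun j _ => ?_
            rw [ENNReal.ofReal_pow (by norm_num)]
            norm_num [ENNReal.ofReal_div_of_pos]
  -- the union of bad sets has measure < 1
  have hBadlt : (volume.restrict Λ) (⋃ α, E α) < 1 := by
    refine (measure_iUnion_le _).trans_lt ?_
    calc ∑' α, (volume.restrict Λ) (E α)
        ≤ ∑' α : Fin d → ℕ, (2⁻¹ : ℝ≥0∞) ^ d * ∏ j, (9⁻¹ : ℝ≥0∞) ^ (α j) :=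
          ENNReal.tsum_le_tsum cheb
      _ = (2⁻¹ : ℝ≥0∞) ^ d * (∑' n : ℕ, (9⁻¹ : ℝ≥0∞) ^ n) ^ d := by
          rw [ENNReal.tsum_mul_left, tsum_pi_prod]
      _ = (2⁻¹ * (1 - 9⁻¹)⁻¹ : ℝ≥0∞) ^ d := by rw [ENNReal.tsum_geometric, mul_pow]
      _ < 1 := by
          have h89 : (1 - 9⁻¹ : ℝ≥0∞) = 8/9 := by
            rw [ENNReal.sub_eq_of_eq_add (by norm_num)]
            rw [show (9:ℝ≥0∞)⁻¹ = 1/9 by rw [one_div], ENNReal.div_add_div_same]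
            norm_num
            rw [ENNReal.div_self (by norm_num) (by norm_num)]
          rw [h89, ENNReal.inv_div (Or.inl (by norm_num)) (Or.inl (by norm_num))]
          have hbase : (2⁻¹ * (9/8) : ℝ≥0∞) < 1 := by
            rw [show (1:ℝ≥0∞) = 2⁻¹ * 2 from (ENNReal.inv_mul_cancel (by norm_num) (by norm_num)).symm]
            refine (ENNReal.mul_lt_mul_iff_right (by norm_num) (by norm_num)).2 ?_
            rw [ENNReal.div_lt_iff (by norm_num) (by norm_num)]
            norm_num
          calc (2⁻¹ * (9/8) : ℝ≥0∞) ^ d ≤ (2⁻¹ * (9/8) : ℝ≥0∞) ^ 1 :=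
                pow_le_pow_of_le_one zero_le hbase.le hd
            _ < 1 := by rwa [pow_one]
  -- total measure is 1
  have hμuniv : (volume.restrict Λ) Set.univ = 1 := by
    rw [Measure.restrict_apply_univ, hΛ, volume_pi_pi]
    simp [Real.volume_Icc]
  -- bad sets are null measurable
  have hEnm : ∀ α, NullMeasurableSet (E α) (volume.restrict Λ) := fun α =>
    (hmeas α).enorm.nullMeasurable measurableSet_Ici
  have hcompl : (volume.restrict Λ) ((⋃ α, E α)ᶜ) =
      (volume.restrict Λ) Set.univ - (volume.restrict Λ) (⋃ α, E α) :=
    measure_compl₀ (NullMeasurableSet.iUnion hEnm) (hBadlt.trans ENNReal.one_lt_top).ne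
  have hpos : 0 < (volume.restrict Λ) ((⋃ α, E α)ᶜ) := by
    rw [hcompl, hμuniv]
    exact tsub_pos_of_lt hBadlt
  have hne : volume ((⋃ α, E α)ᶜ ∩ Λ) ≠ 0 := by
    rw [← Measure.restrict_apply' hΛmeas]
    exact hpos.ne'
  obtain ⟨x, hxc, hxΛ⟩ := nonempty_of_measure_ne_zero hne
  refine ⟨x, hxΛ, fun α => ?_⟩
  have hx : x ∉ E α := fun hx => hxc (Set.mem_iUnion.2 ⟨α, hx⟩)
  rw [hEdef] at hx
  simp only [Set.mem_setOf_eq, not_le] at hx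
  change ‖multiD α f x‖ₑ < _ at hx
  rw [← ofReal_norm] at hx
  have hlt := (ENNReal.ofReal_lt_ofReal_iff_of_nonneg (norm_nonneg _)).1 hx
  exact hlt.le
end

section
/- Let d ≥ 2, L > 0, γ ∈ (0,1], and a = (a₁,…,a_d) ∈ ℝ₊^d with a_j ≤ 2πL for j = 1,…,d−1, and let S ⊆ ℝ^d be a (γ,a)-thick set. Define S^{(0)} := S ∩ Ω_L and, for i = 1,…,d−1, S^{(i)} := S^{(i−1)} ∪ σ_i(S^{(i−1)}), where σ_i : ℝ^d → ℝ^d changes the sign of the i-th coordinate and fixes all other coordinates. Finally, set S̃ := ∪_{κ ∈ (4πLℤ)^{d−1} × {0}} (κ + S^{(d−1)}). Then S̃ is (γ/2^d, 2a)-thick in ℝ^d, where 2a = (2a₁,…,2a_d). -/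
open MeasureTheory

/-- Iterated reflections: `SRefl d L S 0 = S ∩ Ω_L` and
`SRefl d L S i = SRefl d L S (i-1) ∪ σ_i (SRefl d L S (i-1))`, where `σ_i` changes the sign
of the `i`-th coordinate. -/
def SRefl (d : ℕ) (L : ℝ) (S : Set (Fin d → ℝ)) : ℕ → Set (Fin d → ℝ)
  | 0 => S ∩ OmegaL d L
  | i + 1 =>
      SRefl d L S i ∪
        (if h : i < d then
          (fun x : Fin d → ℝ => Function.update x (⟨i, h⟩ : Fin d) (-(x ⟨i, h⟩))) ''
            SRefl d L S i
        else SRefl d L S i)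

lemma exists_branch (T c a : ℝ) (hT : 0 < T) (ha : 0 < a) (haT : a ≤ T) :
    ∃ (e : ℝ) (k : ℤ), c ≤ e ∧ e + a ≤ c + 2 * a ∧ T * k ≤ e ∧ e + a ≤ T * (k + 1) := by
  set k0 : ℤ := ⌊c / T⌋ with hk0
  have h1 : T * k0 ≤ c := by
    have := Int.floor_le (c / T)
    rw [← hk0] at this
    calc T * (k0 : ℝ) ≤ T * (c / T) := by
          exact mul_le_mul_of_nonneg_left this hT.le
      _ = c := by field_simp
  have h2 : c < T * (k0 + 1) := by
    have := Int.lt_floor_add_one (c / T)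
    rw [← hk0] at this
    have : c / T * T < ((k0 : ℝ) + 1) * T := by
      exact mul_lt_mul_of_pos_right this hT
    rw [div_mul_cancel₀ _ hT.ne'] at this
    linarith [this]
  by_cases hc : c + a ≤ T * ((k0 : ℝ) + 1)
  · exact ⟨c, k0, le_refl _, by linarith, h1, by linarith⟩
  · push_neg at hc
    refine ⟨T * ((k0 : ℝ) + 1), k0 + 1, by linarith, by linarith,
      le_of_eq (by push_cast; ring), ?_⟩
    push_cast
    have : T * ((k0 : ℝ) + 1 + 1) = T * ((k0 : ℝ) + 1) + T := by ring
    linarith [this]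

lemma refl_mem (d : ℕ) (L : ℝ) (S : Set (Fin d → ℝ)) :
    ∀ i ≤ d, ∀ z : Fin d → ℝ,
      (fun j : Fin d => if (j : ℕ) < i then |z j| else z j) ∈ S ∩ OmegaL d L →
      z ∈ SRefl d L S i := by
  intro i
  induction i with
  | zero =>
    intro _ z hz
    have he : (fun j : Fin d => if (j : ℕ) < 0 then |z j| else z j) = z := by
      funext j; simp
    rw [he] at hz
    exact hz
  | succ i ih =>
    intro hi z hz
    have hid : i < d := lt_of_lt_of_le (Nat.lt_succ_self i) hi
    set fi : Fin d := ⟨i, hid⟩ with hfi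
    have hSR : SRefl d L S (i + 1) =
        SRefl d L S i ∪ ((fun x => Function.update x fi (-(x fi))) '' SRefl d L S i) := by
      simp [SRefl, dif_pos hid, hfi]
    rw [hSR]
    by_cases hzi : 0 ≤ z fi
    · left
      apply ih (Nat.le_of_succ_le hi)
      have he : (fun j : Fin d => if (j : ℕ) < i then |z j| else z j)
          = (fun j : Fin d => if (j : ℕ) < i + 1 then |z j| else z j) := by
        funext j
        rcases Nat.lt_trichotomy (j : ℕ) i with h | h | h
        · rw [if_pos h, if_pos (Nat.lt_succ_of_lt h)]
        · have hj : j = fi := Fin.ext h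
          rw [if_neg (by omega), if_pos (by omega), hj, abs_of_nonneg hzi]
        · rw [if_neg (by omega), if_neg (by omega)]
      rw [he]; exact hz
    · right
      push_neg at hzi
      set z' := Function.update z fi (-(z fi)) with hz'def
      have hz'fi : z' fi = -(z fi) := Function.update_self fi _ z
      have hz'j : ∀ j : Fin d, j ≠ fi → z' j = z j := fun j hj =>
        Function.update_of_ne hj _ z
      have hz' : z' ∈ SRefl d L S i := by
        apply ih (Nat.le_of_succ_le hi)
        have he : (fun j : Fin d => if (j : ℕ) < i then |z' j| else z' j)
            = (fun j : Fin d => if (j : ℕ) < i + 1 then |z j| else z j) := by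
          funext j
          rcases Nat.lt_trichotomy (j : ℕ) i with h | h | h
          · have hne : j ≠ fi := by
              intro hj; rw [hj] at h; exact absurd h (lt_irrefl i)
            rw [if_pos h, if_pos (Nat.lt_succ_of_lt h), hz'j j hne]
          · have hj : j = fi := Fin.ext h
            rw [if_neg (by omega), if_pos (by omega), hj, hz'fi, abs_of_neg hzi]
          · have hne : j ≠ fi := by
              intro hj; rw [hj] at h; simp [hfi] at h
            rw [if_neg (by omega), if_neg (by omega), hz'j j hne]
        rw [he]; exact hz
      refine ⟨z', hz', ?_⟩
      show Function.update z' fi (-(z' fi)) = z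
      rw [hz'fi, neg_neg, hz'def, Function.update_idem, Function.update_eq_self]


/-- the periodic extension (with period lattice `(4πLℤ)^{d-1} × {0}`) of the
iterated reflection `S^{(d-1)}` of `S ∩ Ω_L` is `(γ/2^d, 2a)`-thick in `ℝ^d`. -/
theorem stmt_14 (d : ℕ) (hd : 2 ≤ d) (L γ : ℝ) (hL : 0 < L) (hγ0 : 0 < γ) (hγ1 : γ ≤ 1)
    (a : Fin d → ℝ) (ha : ∀ j, 0 < a j)
    (haL : ∀ j : Fin d, (j : ℕ) < d - 1 → a j ≤ 2 * Real.pi * L)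
    (S : Set (Fin d → ℝ)) (hSm : MeasurableSet S) (hthick : IsThick γ a S) :
    IsThick (γ / 2 ^ d) (fun j => 2 * a j)
      (⋃ κ ∈ {κ : Fin d → ℝ |
          (∀ j : Fin d, (j : ℕ) < d - 1 → ∃ m : ℤ, κ j = m * (4 * Real.pi * L)) ∧
          (∀ j : Fin d, ¬((j : ℕ) < d - 1) → κ j = 0)},
        (fun x => κ + x) '' SRefl d L S (d - 1)) := by
  intro c
  have hT : (0:ℝ) < 2 * Real.pi * L := by positivity
  have H : ∀ j : Fin d, ∃ ε b u : ℝ,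
      (ε = 1 ∨ ε = -1) ∧
      (∀ t : ℝ, u < ε * (t - b) → ε * (t - b) < u + a j →
        c j < t ∧ t < c j + 2 * a j) ∧
      ((j : ℕ) < d - 1 →
        (∀ t : ℝ, u < ε * (t - b) → ε * (t - b) < u + a j → |t - b| = ε * (t - b)) ∧
        0 ≤ u ∧ u + a j ≤ 2 * Real.pi * L ∧
        ∃ m : ℤ, b = (m : ℝ) * (4 * Real.pi * L)) ∧
      (¬ ((j : ℕ) < d - 1) → ε = 1 ∧ b = 0) := by
    intro j
    by_cases hj : (j : ℕ) < d - 1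
    · obtain ⟨e, k, he1, he2, he3, he4⟩ :=
        exists_branch (2 * Real.pi * L) (c j) (a j) hT (ha j) (haL j hj)
      have hk1 : 2 * Real.pi * L * ((k:ℝ) + 1) = 2 * Real.pi * L * k + 2 * Real.pi * L := by
        ring
      rcases Int.even_or_odd k with ⟨m, hm⟩ | ⟨m, hm⟩
      · refine ⟨1, 2 * Real.pi * L * k, e - 2 * Real.pi * L * k, Or.inl rfl,
          ?_, fun _ => ⟨?_, by linarith, by linarith, ⟨m, ?_⟩⟩, fun h => absurd hj h⟩
        · intro t h1 h2
          rw [one_mul] at h1 h2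
          exact ⟨by linarith, by linarith⟩
        · intro t h1 h2
          rw [one_mul] at h1 ⊢
          exact abs_of_pos (by linarith)
        · have : (k : ℝ) = (m : ℝ) + (m : ℝ) := by exact_mod_cast congrArg (Int.cast : ℤ → ℝ) hm
          rw [this]; ring
      · refine ⟨-1, 2 * Real.pi * L * ((k:ℝ) + 1), 2 * Real.pi * L * ((k:ℝ) + 1) - e - a j,
          Or.inr rfl, ?_, fun _ => ⟨?_, by linarith, by linarith, ⟨m + 1, ?_⟩⟩,
          fun h => absurd hj h⟩
        · intro t h1 h2
          exact ⟨by linarith, by linarith⟩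
        · intro t h1 h2
          have ht : t - 2 * Real.pi * L * ((k:ℝ) + 1) < 0 := by linarith
          rw [abs_of_neg ht]; ring
        · have : (k : ℝ) = 2 * (m : ℝ) + 1 := by exact_mod_cast congrArg (Int.cast : ℤ → ℝ) hm
          rw [this]; push_cast; ring
    · refine ⟨1, 0, c j, Or.inl rfl, ?_, fun h => absurd h hj, fun _ => ⟨rfl, rfl⟩⟩
      intro t h1 h2
      rw [one_mul] at h1 h2
      have := ha j
      exact ⟨by linarith, by linarith⟩
  choose ε b u hA hB hC hD using H
  have hcoord : ∀ j : Fin d, MeasurePreserving (fun t : ℝ => ε j * (t - b j))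
      volume volume := by
    intro j
    rcases hA j with h | h
    · have he : (fun t : ℝ => ε j * (t - b j)) = fun t => t - b j := by
        funext t; rw [h]; ring
      rw [he]; exact measurePreserving_sub_right volume (b j)
    · have he : (fun t : ℝ => ε j * (t - b j)) = fun t => b j - t := by
        funext t; rw [h]; ring
      rw [he]; exact Measure.measurePreserving_sub_left volume (b j)
  have hmp : MeasurePreserving (fun (x : Fin d → ℝ) (j : Fin d) => ε j * (x j - b j))
      volume volume := volume_preserving_pi hcoord
  have hRm : MeasurableSet (S ∩ Set.univ.pi fun j => Set.Ioo (u j) (u j + a j)) :=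
    hSm.inter (MeasurableSet.univ_pi fun j => measurableSet_Ioo)
  have hsub : (fun (x : Fin d → ℝ) (j : Fin d) => ε j * (x j - b j)) ⁻¹'
        (S ∩ Set.univ.pi fun j => Set.Ioo (u j) (u j + a j)) ⊆
      (⋃ κ ∈ {κ : Fin d → ℝ |
          (∀ j : Fin d, (j : ℕ) < d - 1 → ∃ m : ℤ, κ j = m * (4 * Real.pi * L)) ∧
          (∀ j : Fin d, ¬((j : ℕ) < d - 1) → κ j = 0)},
        (fun x => κ + x) '' SRefl d L S (d - 1)) ∩
      Set.univ.pi fun j => Set.Ioo (c j) (c j + 2 * a j) := by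
    intro x hx
    obtain ⟨hxS, hxR⟩ := hx
    rw [Set.mem_univ_pi] at hxR
    have hxRj : ∀ j, u j < ε j * (x j - b j) ∧ ε j * (x j - b j) < u j + a j := by
      intro j; exact hxR j
    constructor
    · refine Set.mem_iUnion₂.mpr ⟨b, ⟨fun j hj => (hC j hj).2.2.2,
        fun j hj => (hD j hj).2⟩, ?_⟩
      refine ⟨x - b, ?_, by show b + (x - b) = x; abel⟩
      apply refl_mem d L S (d - 1) (Nat.sub_le d 1)
      have he : (fun j : Fin d => if (j : ℕ) < d - 1 then |(x - b) j| else (x - b) j)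
          = fun j => ε j * (x j - b j) := by
        funext j
        by_cases hj : (j : ℕ) < d - 1
        · rw [if_pos hj, Pi.sub_apply]
          exact (hC j hj).1 (x j) (hxRj j).1 (hxRj j).2
        · rw [if_neg hj, Pi.sub_apply, (hD j hj).1, (hD j hj).2, one_mul, sub_zero]
      rw [he]
      refine ⟨hxS, fun j hj => ?_⟩
      exact ⟨lt_of_le_of_lt (hC j hj).2.1 (hxRj j).1,
        lt_of_lt_of_le (hxRj j).2 (hC j hj).2.2.1⟩
    · rw [Set.mem_univ_pi]
      intro j
      exact Set.mem_Ioo.mpr (hB j (x j) (hxRj j).1 (hxRj j).2)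
  have hvolR : volume (Set.univ.pi fun j => Set.Ioo (u j) (u j + a j))
      = ∏ j : Fin d, ENNReal.ofReal (a j) := by
    rw [volume_pi_pi]
    exact Finset.prod_congr rfl fun j _ => by rw [Real.volume_Ioo, add_sub_cancel_left]
  have hvolP : volume (Set.univ.pi fun j => Set.Ioo (c j) (c j + 2 * a j))
      = ∏ j : Fin d, ENNReal.ofReal (2 * a j) := by
    rw [volume_pi_pi]
    exact Finset.prod_congr rfl fun j _ => by rw [Real.volume_Ioo, add_sub_cancel_left]
  calc ENNReal.ofReal (γ / 2 ^ d) *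
        volume (Set.univ.pi fun j => Set.Ioo (c j) (c j + 2 * a j))
      = ENNReal.ofReal γ * volume (Set.univ.pi fun j => Set.Ioo (u j) (u j + a j)) := by
        rw [hvolP, hvolR]
        have h2 : ∀ j : Fin d, ENNReal.ofReal (2 * a j)
            = ENNReal.ofReal 2 * ENNReal.ofReal (a j) :=
          fun j => ENNReal.ofReal_mul (by norm_num)
        simp_rw [h2]
        rw [Finset.prod_mul_distrib, Finset.prod_const, Finset.card_univ, Fintype.card_fin,
          ← mul_assoc]
        congr 1
        rw [← ENNReal.ofReal_pow (by norm_num), ← ENNReal.ofReal_mul (by positivity)]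
        congr 1
        field_simp
    _ ≤ volume (S ∩ Set.univ.pi fun j => Set.Ioo (u j) (u j + a j)) := hthick u
    _ = volume ((fun (x : Fin d → ℝ) (j : Fin d) => ε j * (x j - b j)) ⁻¹'
        (S ∩ Set.univ.pi fun j => Set.Ioo (u j) (u j + a j))) :=
        (hmp.measure_preimage hRm.nullMeasurableSet).symm
    _ ≤ _ := measure_mono hsub
end
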